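/- arXiv:2011.04926 — 6 statements merged into one kernel-verified Lean document; each statement's English description precedes it below -/
import Mathlib

section
/- Under Assumptions 1, 2, 3 on h1 and h2, the separable-GAN loss satisfies: for every Y ∈ (ℝ^d)^n, g_SP(Y) ≥ (1/2)·ξ(1) = (1/2)·sup_{t∈ℝ}(h1(t) + h2(−t)), and equality holds if and only if there exists a permutation σ of {1,…,n} such that y_i = x_{σ(i)} for all i (i.e., the multiset {y_1,…,y_n} equals {x_1,…,x_n}). -/
open scoped BigOperators

/-- ξ(m) = sup_{t∈ℝ} (h1(t) + m·h2(−t)). -/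
noncomputable def xi (h1 h2 : ℝ → ℝ) (m : ℕ) : ℝ :=
  sSup {s : ℝ | ∃ t : ℝ, s = h1 t + (m : ℝ) * h2 (-t)}

/-- The separable-GAN loss
g_SP(Y) = (1/(2n)) · sup over continuous f of Σ_i [h1(f(x_i)) + h2(−f(y_i))]. -/
noncomputable def gSP {d n : ℕ} (h1 h2 : ℝ → ℝ)
    (x Y : Fin n → EuclideanSpace ℝ (Fin d)) : ℝ :=
  (1 / (2 * (n : ℝ))) * sSup {s : ℝ |
    ∃ f : EuclideanSpace ℝ (Fin d) → ℝ, Continuous f ∧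
      s = ∑ i, (h1 (f (x i)) + h2 (-(f (Y i))))}

open Finset


lemma interp {E : Type*} [MetricSpace E] (s : Finset E) (v : E → ℝ) :
    ∃ f : E → ℝ, Continuous f ∧ ∀ p ∈ s, f p = v p := by
  classical
  set δ : E → ℝ := fun p => if h : (s.erase p).Nonempty then (s.erase p).inf' h (dist p) else 1
    with hδ
  have hδpos : ∀ p ∈ s, 0 < δ p := by
    intro p hp
    by_cases h : (s.erase p).Nonempty
    · simp only [hδ, dif_pos h]
      apply (Finset.lt_inf'_iff h).2
      intro q hq
      exact dist_pos.2 (Ne.symm (Finset.ne_of_mem_erase hq))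
    · simp [hδ, dif_neg h]
  refine ⟨fun z => ∑ p ∈ s, v p * max 0 (1 - dist z p / δ p), ?_, ?_⟩
  · apply continuous_finset_sum
    intro p _
    exact continuous_const.mul (continuous_const.max
      ((continuous_const.sub ((continuous_id.dist continuous_const).div_const _)))
      )
  · intro q hq
    show (∑ p ∈ s, v p * max 0 (1 - dist q p / δ p)) = v q
    rw [Finset.sum_eq_single q]
    · simp [dist_self, hδpos q hq]
    · intro p hp hpq
      have h1 : δ p ≤ dist q p := by
        have hmem : q ∈ s.erase p := Finset.mem_erase.2 ⟨hpq.symm, hq⟩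
        have hne : (s.erase p).Nonempty := ⟨q, hmem⟩
        simp only [hδ, dif_pos hne]
        exact (Finset.inf'_le (dist p) hmem).trans_eq (dist_comm p q)
      have h2 : (1 : ℝ) ≤ dist q p / δ p :=
        (one_le_div (hδpos p hp)).2 h1
      have : max 0 (1 - dist q p / δ p) = 0 := max_eq_left (by linarith)
      simp [this]
    · intro h; exact absurd hq h


open scoped Classical in
lemma decomp {n : ℕ} {E : Type*} (x Y : Fin n → E) (hx : Function.Injective x) (g : E → ℝ) :
    ∑ j, g (Y j) = (∑ i, ((Finset.univ.filter fun j => Y j = x i).card : ℝ) * g (x i))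
      + ∑ j ∈ Finset.univ.filter (fun j => ∀ i, Y j ≠ x i), g (Y j) := by
  classical
  set c : Fin n → Option (Fin n) := fun j => if h : ∃ i, Y j = x i then some h.choose else none
    with hc
  have hfib : ∀ i : Fin n, Finset.univ.filter (fun j => c j = some i)
      = Finset.univ.filter (fun j => Y j = x i) := by
    intro i; ext j; simp only [mem_filter, mem_univ, true_and]
    constructor
    · intro hj
      by_cases h : ∃ i', Y j = x i'
      · have hs := h.choose_spec
        simp only [hc, dif_pos h, Option.some_inj] at hj
        rw [← hj]; exact hs
      · simp [hc, dif_neg h] at hj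
    · intro hj
      have h : ∃ i', Y j = x i' := ⟨i, hj⟩
      have hs := h.choose_spec
      have : h.choose = i := hx (by rw [← hs, ← hj])
      simp only [hc, dif_pos h, this]
  have hnone : Finset.univ.filter (fun j => c j = none)
      = Finset.univ.filter (fun j => ∀ i, Y j ≠ x i) := by
    ext j; simp only [mem_filter, mem_univ, true_and]
    have : (c j = none) ↔ ¬∃ i, Y j = x i := by
      by_cases h : ∃ i, Y j = x i
      · simp [hc, dif_pos h, h]
      · simp [hc, dif_neg h, h]
    rw [this, not_exists]
  have key : ∑ o : Option (Fin n), ∑ j ∈ Finset.univ.filter (fun j => c j = o), g (Y j)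
      = ∑ j, g (Y j) :=
    Finset.sum_fiberwise_of_maps_to (fun j _ => Finset.mem_univ _) _
  rw [← key, Fintype.sum_option, hnone, add_comm]
  congr 1
  apply Finset.sum_congr rfl
  intro i _
  rw [hfib i]
  have : ∑ j ∈ Finset.univ.filter (fun j => Y j = x i), g (Y j)
      = ∑ j ∈ Finset.univ.filter (fun j => Y j = x i), g (x i) := by
    apply Finset.sum_congr rfl
    intro j hj
    rw [(Finset.mem_filter.1 hj).2]
  rw [this, Finset.sum_const, nsmul_eq_mul]



lemma xiSet_nonempty (h1 h2 : ℝ → ℝ) (m : ℕ) :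
    {s : ℝ | ∃ t : ℝ, s = h1 t + (m : ℝ) * h2 (-t)}.Nonempty :=
  ⟨h1 0 + (m : ℝ) * h2 (-0), 0, rfl⟩

lemma xiSet_bdd {h1 h2 : ℝ → ℝ} (A1a : IsLUB (Set.range h1) 0) (A1b : IsLUB (Set.range h2) 0)
    (m : ℕ) : BddAbove {s : ℝ | ∃ t : ℝ, s = h1 t + (m : ℝ) * h2 (-t)} := by
  refine ⟨0, ?_⟩
  rintro s ⟨t, rfl⟩
  have h1t : h1 t ≤ 0 := A1a.1 ⟨t, rfl⟩
  have h2t : h2 (-t) ≤ 0 := A1b.1 ⟨-t, rfl⟩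
  have : (m : ℝ) * h2 (-t) ≤ 0 := mul_nonpos_of_nonneg_of_nonpos (Nat.cast_nonneg m) h2t
  linarith

lemma le_xi {h1 h2 : ℝ → ℝ} (A1a : IsLUB (Set.range h1) 0) (A1b : IsLUB (Set.range h2) 0)
    (m : ℕ) (t : ℝ) : h1 t + (m : ℝ) * h2 (-t) ≤ xi h1 h2 m :=
  le_csSup (xiSet_bdd A1a A1b m) ⟨t, rfl⟩

lemma xi_zero {h1 h2 : ℝ → ℝ} (A1a : IsLUB (Set.range h1) 0) : xi h1 h2 0 = 0 := by
  apply IsLUB.csSup_eq _ (xiSet_nonempty h1 h2 0)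
  constructor
  · rintro s ⟨t, rfl⟩
    have : h1 t ≤ 0 := A1a.1 ⟨t, rfl⟩
    simpa using this
  · intro b hb
    apply A1a.2
    rintro y ⟨t, rfl⟩
    have : h1 t ∈ {s : ℝ | ∃ t : ℝ, s = h1 t + ((0 : ℕ) : ℝ) * h2 (-t)} := ⟨t, by simp⟩
    simpa using hb this

lemma exists_h2_near {h2 : ℝ → ℝ} (A1b : IsLUB (Set.range h2) 0) {ε : ℝ} (hε : 0 < ε) :
    ∃ u : ℝ, -ε < h2 u := by
  by_contra h
  push_neg at h
  have : (0 : ℝ) ≤ -ε := A1b.2 (by rintro y ⟨u, rfl⟩; exact h u)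
  linarith

lemma exists_xi_near (h1 h2 : ℝ → ℝ) (m : ℕ) {ε : ℝ} (hε : 0 < ε) :
    ∃ t : ℝ, xi h1 h2 m - ε < h1 t + (m : ℝ) * h2 (-t) := by
  obtain ⟨s, ⟨t, rfl⟩, hlt⟩ := exists_lt_of_lt_csSup (xiSet_nonempty h1 h2 m)
    (show xi h1 h2 m - ε < xi h1 h2 m by linarith)
  exact ⟨t, hlt⟩

open scoped Classical in
lemma isLUB_loss {d n : ℕ} (x Y : Fin n → EuclideanSpace ℝ (Fin d)) (hx : Function.Injective x)
    {h1 h2 : ℝ → ℝ} (A1a : IsLUB (Set.range h1) 0) (A1b : IsLUB (Set.range h2) 0) :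
    IsLUB {s : ℝ | ∃ f : EuclideanSpace ℝ (Fin d) → ℝ, Continuous f ∧
        s = ∑ i, (h1 (f (x i)) + h2 (-(f (Y i))))}
      (∑ i, xi h1 h2 ((Finset.univ.filter fun j => Y j = x i).card)) := by
  set m : Fin n → ℕ := fun i => (Finset.univ.filter fun j => Y j = x i).card with hm
  set T : ℝ := ∑ i, xi h1 h2 (m i) with hT
  set off : Finset (Fin n) := Finset.univ.filter (fun j => ∀ i, Y j ≠ x i) with hoff
  have hoffcard : off.card ≤ n := le_trans (Finset.card_le_card (Finset.filter_subset _ _))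
    (by simp)
  constructor
  · -- upper bound
    rintro s ⟨f, hf, rfl⟩
    rw [Finset.sum_add_distrib]
    have hdec : ∑ j, h2 (-(f (Y j))) = (∑ i, (m i : ℝ) * h2 (-(f (x i))))
        + ∑ j ∈ off, h2 (-(f (Y j))) := by convert decomp x Y hx (fun z => h2 (-(f z)))
    rw [hdec]
    have hoffle : ∑ j ∈ off, h2 (-(f (Y j))) ≤ 0 :=
      Finset.sum_nonpos (fun j _ => A1b.1 ⟨_, rfl⟩)
    have hmain : (∑ i, h1 (f (x i))) + ∑ i, ((m i : ℝ) * h2 (-(f (x i)))) ≤ T := by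
      rw [← Finset.sum_add_distrib]
      exact Finset.sum_le_sum (fun i _ => le_xi A1a A1b (m i) (f (x i)))
    calc (∑ i, h1 (f (x i))) + ((∑ i, ((m i : ℝ) * h2 (-(f (x i)))))
          + ∑ j ∈ off, h2 (-(f (Y j))))
        ≤ (∑ i, h1 (f (x i))) + ∑ i, ((m i : ℝ) * h2 (-(f (x i)))) := by linarith
      _ ≤ T := hmain
  · -- least
    intro b hb
    by_contra hlt
    push_neg at hlt
    set ε : ℝ := T - b with hε
    have hεpos : 0 < ε := by simp [hε]; linarith
    set ε' : ℝ := ε / (2 * n + 1) with hε'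
    have hε'pos : 0 < ε' := div_pos hεpos (by positivity)
    -- choose values
    choose t ht using fun i : Fin n => exists_xi_near h1 h2 (m i) hε'pos
    obtain ⟨u0, hu0⟩ := exists_h2_near A1b hε'pos
    -- interpolating function
    set Q : Finset (EuclideanSpace ℝ (Fin d)) := Finset.image x Finset.univ ∪ Finset.image Y Finset.univ with hQ
    set v : EuclideanSpace ℝ (Fin d) → ℝ := fun p => if h : ∃ i, x i = p then t h.choose else -u0 with hv
    obtain ⟨f, hfc, hfv⟩ := interp Q v
    have hfx : ∀ i, f (x i) = t i := by
      intro i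
      have hmem : x i ∈ Q := Finset.mem_union_left _ (Finset.mem_image_of_mem x (mem_univ i))
      rw [hfv _ hmem]
      have h : ∃ i', x i' = x i := ⟨i, rfl⟩
      have hs := h.choose_spec
      have : h.choose = i := hx hs
      simp only [hv, dif_pos h, this]
    have hfYoff : ∀ j ∈ off, f (Y j) = -u0 := by
      intro j hj
      have hj' := (Finset.mem_filter.1 hj).2
      have hmem : Y j ∈ Q := Finset.mem_union_right _ (Finset.mem_image_of_mem Y (mem_univ j))
      rw [hfv _ hmem]
      have h : ¬∃ i, x i = Y j := by
        rintro ⟨i, hi⟩; exact hj' i hi.symm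
      simp only [hv, dif_neg h]
    -- the value attained
    have hmemS : (∑ i, (h1 (f (x i)) + h2 (-(f (Y i))))) ∈
        {s : ℝ | ∃ f : EuclideanSpace ℝ (Fin d) → ℝ, Continuous f ∧ s = ∑ i, (h1 (f (x i)) + h2 (-(f (Y i))))} :=
      ⟨f, hfc, rfl⟩
    have hsle := hb hmemS
    -- compute a lower bound for this value
    have hdec : ∑ j, h2 (-(f (Y j))) = (∑ i, (m i : ℝ) * h2 (-(f (x i))))
        + ∑ j ∈ off, h2 (-(f (Y j))) := by convert decomp x Y hx (fun z => h2 (-(f z)))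
    have hoffsum : ∑ j ∈ off, h2 (-(f (Y j))) = (off.card : ℝ) * h2 u0 := by
      rw [show ∑ j ∈ off, h2 (-(f (Y j))) = ∑ j ∈ off, h2 u0 from
        Finset.sum_congr rfl (fun j hj => by rw [hfYoff j hj, neg_neg])]
      rw [Finset.sum_const, nsmul_eq_mul]
    have hval : ∑ i, (h1 (f (x i)) + h2 (-(f (Y i))))
        = (∑ i, (h1 (t i) + (m i : ℝ) * h2 (-(t i)))) + (off.card : ℝ) * h2 u0 := by
      rw [Finset.sum_add_distrib, hdec, hoffsum, ← add_assoc, ← Finset.sum_add_distrib]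
      congr 1
      apply Finset.sum_congr rfl
      intro i _
      rw [hfx i]
    have hlow1 : ∑ i, (xi h1 h2 (m i) - ε') ≤ ∑ i, (h1 (t i) + (m i : ℝ) * h2 (-(t i))) :=
      Finset.sum_le_sum (fun i _ => (ht i).le)
    have hlow2 : (n : ℝ) * (-ε') ≤ (off.card : ℝ) * h2 u0 := by
      have h1' : (off.card : ℝ) * (-ε') ≤ (off.card : ℝ) * h2 u0 :=
        mul_le_mul_of_nonneg_left hu0.le (Nat.cast_nonneg _)
      have h2' : (n : ℝ) * (-ε') ≤ (off.card : ℝ) * (-ε') := by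
        apply mul_le_mul_of_nonpos_right _ (by linarith)
        exact_mod_cast hoffcard
      linarith
    have hsumc : ∑ i, (xi h1 h2 (m i) - ε') = T - n * ε' := by
      rw [Finset.sum_sub_distrib, Finset.sum_const, nsmul_eq_mul]
      simp [hT]
    have hfinal : T - 2 * n * ε' ≤ ∑ i, (h1 (f (x i)) + h2 (-(f (Y i)))) := by
      rw [hval]
      have := hlow1
      rw [hsumc] at this
      linarith
    have : 2 * (n : ℝ) * ε' < ε := by
      have h2n1 : (0:ℝ) < 2 * n + 1 := by positivity
      rw [hε', ← mul_div_assoc, div_lt_iff₀ h2n1]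
      nlinarith [hεpos]
    linarith [hsle, hfinal, this]

theorem stmt0 {d n : ℕ} (hd : 1 ≤ d) (hn : 1 ≤ n)
    (x : Fin n → EuclideanSpace ℝ (Fin d)) (hx : Function.Injective x)
    (h1 h2 : ℝ → ℝ)
    (A1a : IsLUB (Set.range h1) 0) (A1b : IsLUB (Set.range h2) 0)
    (A2 : ∀ m : ℕ, 2 ≤ m → m ≤ n → (m : ℝ) * xi h1 h2 1 < xi h1 h2 m)
    (A3 : ∀ m : ℕ, 1 ≤ m → m ≤ n → xi h1 h2 m < xi h1 h2 (m - 1)) :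
    ∀ Y : Fin n → EuclideanSpace ℝ (Fin d),
      (1 / 2) * xi h1 h2 1 ≤ gSP h1 h2 x Y ∧
      (gSP h1 h2 x Y = (1 / 2) * xi h1 h2 1 ↔
        ∃ σ : Equiv.Perm (Fin n), ∀ i, Y i = x (σ i)) := by
  intro Y
  classical
  have hn0 : (0 : ℝ) < n := by exact_mod_cast hn
  set ξ1 : ℝ := xi h1 h2 1 with hξ1
  have hξ1neg : ξ1 < 0 := by
    have := A3 1 le_rfl hn
    rwa [show (1 : ℕ) - 1 = 0 from rfl, xi_zero A1a] at this
  set m : Fin n → ℕ := fun i => (Finset.univ.filter fun j => Y j = x i).card with hm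
  set T : ℝ := ∑ i, xi h1 h2 (m i) with hT
  have hlub : IsLUB {s : ℝ | ∃ f : EuclideanSpace ℝ (Fin d) → ℝ, Continuous f ∧
      s = ∑ i, (h1 (f (x i)) + h2 (-(f (Y i))))} T := isLUB_loss x Y hx A1a A1b
  have hSne : {s : ℝ | ∃ f : EuclideanSpace ℝ (Fin d) → ℝ, Continuous f ∧
      s = ∑ i, (h1 (f (x i)) + h2 (-(f (Y i))))}.Nonempty :=
    ⟨_, fun _ => (0 : ℝ), continuous_const, rfl⟩
  have hgSP : gSP h1 h2 x Y = (1 / (2 * (n : ℝ))) * T := by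
    rw [gSP, hlub.csSup_eq hSne]
  -- counting
  set off : Finset (Fin n) := Finset.univ.filter (fun j => ∀ i, Y j ≠ x i) with hoff
  have hcount : (n : ℝ) = (∑ i, (m i : ℝ)) + (off.card : ℝ) := by
    have hdec : ∑ _j : Fin n, (1 : ℝ) = (∑ i, (m i : ℝ) * 1) + ∑ _j ∈ off, (1 : ℝ) := by
      convert decomp x Y hx (fun _ => (1 : ℝ))
    simp only [mul_one, Finset.sum_const, Finset.card_univ, Fintype.card_fin,
      nsmul_eq_mul] at hdec
    exact hdec
  have hmn : ∀ i, m i ≤ n := by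
    intro i
    calc m i ≤ Finset.univ.card := Finset.card_le_card (Finset.filter_subset _ _)
      _ = n := by simp
  have hxi_ge : ∀ i : Fin n, (m i : ℝ) * ξ1 ≤ xi h1 h2 (m i) := by
    intro i
    rcases Nat.lt_or_ge (m i) 2 with h2' | h2'
    · interval_cases h : m i
      · simp [xi_zero A1a]
      · simp [hξ1]
    · exact (A2 (m i) h2' (hmn i)).le
  have hsum_ge : (∑ i, (m i : ℝ)) * ξ1 ≤ T := by
    rw [Finset.sum_mul]
    exact Finset.sum_le_sum (fun i _ => hxi_ge i)
  have hsumle : (∑ i, (m i : ℝ)) ≤ (n : ℝ) := by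
    have : (0 : ℝ) ≤ (off.card : ℝ) := Nat.cast_nonneg _
    linarith
  have hTn : (n : ℝ) * ξ1 ≤ T := by
    have : (n : ℝ) * ξ1 ≤ (∑ i, (m i : ℝ)) * ξ1 :=
      mul_le_mul_of_nonpos_right hsumle hξ1neg.le
    linarith
  have heqconst : (1 / 2 : ℝ) * ξ1 = (1 / (2 * (n : ℝ))) * ((n : ℝ) * ξ1) := by
    field_simp
  constructor
  · rw [hgSP, heqconst]
    exact mul_le_mul_of_nonneg_left hTn (by positivity)
  constructor
  · -- equality → permutation
    intro hg
    have hTeq : T = (n : ℝ) * ξ1 := by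
      rw [hgSP, heqconst] at hg
      exact mul_left_cancel₀ (by positivity) hg
    -- all intermediate inequalities are equalities
    have hsumeq : (∑ i, (m i : ℝ)) = (n : ℝ) := by
      by_contra hne
      have hlt : (∑ i, (m i : ℝ)) < (n : ℝ) := lt_of_le_of_ne hsumle hne
      have : (n : ℝ) * ξ1 < (∑ i, (m i : ℝ)) * ξ1 := by nlinarith
      linarith [hsum_ge, hTeq ▸ this]
    have hoff0 : off = ∅ := by
      have : (off.card : ℝ) = 0 := by linarith [hcount, hsumeq]
      exact Finset.card_eq_zero.1 (by exact_mod_cast this)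
    have hterm : ∀ i ∈ Finset.univ, xi h1 h2 (m i) - (m i : ℝ) * ξ1 = 0 := by
      rw [← Finset.sum_eq_zero_iff_of_nonneg (fun i _ => by linarith [hxi_ge i])]
      rw [Finset.sum_sub_distrib, ← Finset.sum_mul, hsumeq, ← hT, hTeq]
      ring
    have hm_le1 : ∀ i, m i ≤ 1 := by
      intro i
      by_contra h
      push_neg at h
      have heq : xi h1 h2 (m i) = (m i : ℝ) * ξ1 := by
        have := hterm i (Finset.mem_univ i); linarith
      linarith [A2 (m i) h (hmn i)]
    have hsumnat : ∑ i, m i = n := by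
      have : ((∑ i, m i : ℕ) : ℝ) = (n : ℝ) := by push_cast; exact hsumeq
      exact_mod_cast this
    have hm1 : ∀ i, m i = 1 := by
      by_contra h
      push_neg at h
      obtain ⟨i0, hi0⟩ := h
      have hlt : ∑ i, m i < ∑ _i : Fin n, 1 :=
        Finset.sum_lt_sum (fun i _ => hm_le1 i)
          ⟨i0, Finset.mem_univ _, by have := hm_le1 i0; omega⟩
      simp only [Finset.sum_const, Finset.card_univ, Fintype.card_fin, smul_eq_mul,
        mul_one] at hlt
      omega
    -- build permutation
    have hall : ∀ j, ∃ i, Y j = x i := by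
      intro j
      by_contra h
      push_neg at h
      have : j ∈ off := Finset.mem_filter.2 ⟨Finset.mem_univ j, h⟩
      rw [hoff0] at this
      exact absurd this (Finset.notMem_empty j)
    choose τ hτ using hall
    have hinj : Function.Injective τ := by
      intro j1 j2 he
      have h1' : j1 ∈ Finset.univ.filter (fun j => Y j = x (τ j1)) :=
        Finset.mem_filter.2 ⟨Finset.mem_univ _, hτ j1⟩
      have h2' : j2 ∈ Finset.univ.filter (fun j => Y j = x (τ j1)) :=
        Finset.mem_filter.2 ⟨Finset.mem_univ _, by rw [he]; exact hτ j2⟩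
      have hcard : (Finset.univ.filter (fun j => Y j = x (τ j1))).card ≤ 1 :=
        le_of_eq (hm1 (τ j1))
      exact Finset.card_le_one.1 hcard j1 h1' j2 h2'
    exact ⟨Equiv.ofBijective τ (Finite.injective_iff_bijective.1 hinj), fun j => hτ j⟩
  · -- permutation → equality
    rintro ⟨σ, hσ⟩
    have hm1 : ∀ i, m i = 1 := by
      intro i
      have : (Finset.univ.filter fun j => Y j = x i) = {σ.symm i} := by
        ext j
        simp only [Finset.mem_filter, Finset.mem_univ, true_and, Finset.mem_singleton, hσ,
          hx.eq_iff]
        exact ⟨fun h => by rw [← h]; simp, fun h => by rw [h]; simp⟩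
      simpa using congrArg Finset.card this
    have hTeq : T = (n : ℝ) * ξ1 := by
      rw [hT]
      rw [Finset.sum_congr rfl (fun i _ => by rw [hm1 i])]
      simp [hξ1, mul_comm]
    rw [hgSP, hTeq, ← heqconst]
end

section
/- Suppose h1, h2 : ℝ → ℝ satisfy sup_{t∈ℝ} h1(t) = sup_{t∈ℝ} h2(t) = 0, and x_1, …, x_n ∈ ℝ^d are distinct. Then for every Y = (y_1, …, y_n) ∈ (ℝ^d)^n, the separable-GAN loss evaluates exactly to g_SP(Y) = (1/(2n)) · Σ_{i=1}^n ξ(m_i), where m_i = #{j ∈ {1,…,n} : y_j = x_i} and ξ(m) = sup_{t∈ℝ}(h1(t) + m·h2(−t)). -/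
open scoped BigOperators

lemma exists_cont_ext {E : Type*} [TopologicalSpace E] [NormalSpace E] [T1Space E]
    (P : Set E) (hP : P.Finite) (v : E → ℝ) :
    ∃ f : E → ℝ, Continuous f ∧ ∀ p ∈ P, f p = v p := by
  have : Finite P := hP.to_subtype
  have : DiscreteTopology P := Finite.instDiscreteTopology
  obtain ⟨g, hg⟩ := ContinuousMap.exists_restrict_eq hP.isClosed
    (⟨fun p : P => v p, continuous_of_discreteTopology⟩ : C(P, ℝ))
  refine ⟨g, g.continuous, fun p hp => ?_⟩
  have h2 := ContinuousMap.congr_fun hg ⟨p, hp⟩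
  simpa using h2

theorem stmt2 {d n : ℕ} (hd : 1 ≤ d) (hn : 1 ≤ n)
    (x : Fin n → EuclideanSpace ℝ (Fin d)) (hx : Function.Injective x)
    (h1 h2 : ℝ → ℝ)
    (A1a : IsLUB (Set.range h1) 0) (A1b : IsLUB (Set.range h2) 0) :
    ∀ Y : Fin n → EuclideanSpace ℝ (Fin d),
      gSP h1 h2 x Y
        = (1 / (2 * (n : ℝ))) *
            ∑ i, xi h1 h2 (Set.ncard {j : Fin n | Y j = x i}) := by
  classical
  intro Y
  unfold gSP
  congr 1
  have hh1 : ∀ t, h1 t ≤ 0 := fun t => A1a.1 ⟨t, rfl⟩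
  have hh2 : ∀ t, h2 t ≤ 0 := fun t => A1b.1 ⟨t, rfl⟩
  set m : Fin n → ℕ := fun i => Set.ncard {j : Fin n | Y j = x i} with hm
  set T : Fin n → Finset (Fin n) := fun i => Finset.univ.filter (fun j => Y j = x i) with hT
  have mcard : ∀ i, m i = (T i).card := by
    intro i
    have hset : {j : Fin n | Y j = x i} = ↑(T i) := by ext j; simp [hT]
    rw [hm]
    simp only [hset, Set.ncard_coe_finset]
  have hbdd : ∀ k : ℕ, BddAbove {s : ℝ | ∃ t : ℝ, s = h1 t + (k : ℝ) * h2 (-t)} := by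
    intro k
    refine ⟨0, ?_⟩
    rintro s ⟨t, rfl⟩
    have := mul_nonpos_of_nonneg_of_nonpos (Nat.cast_nonneg (α := ℝ) k) (hh2 (-t))
    linarith [hh1 t]
  have hne : ∀ k : ℕ, ({s : ℝ | ∃ t : ℝ, s = h1 t + (k : ℝ) * h2 (-t)}).Nonempty :=
    fun k => ⟨h1 0 + (k : ℝ) * h2 (-0), 0, rfl⟩
  have le_xi : ∀ (k : ℕ) (t : ℝ), h1 t + (k : ℝ) * h2 (-t) ≤ xi h1 h2 k := by
    intro k t
    exact le_csSup (hbdd k) ⟨t, rfl⟩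
  have hdisj : ∀ i ∈ Finset.univ (α := Fin n), ∀ i' ∈ Finset.univ (α := Fin n),
      i ≠ i' → Disjoint (T i) (T i') := by
    intro i _ i' _ hne'
    rw [Finset.disjoint_left]
    intro j hj hj'
    simp [hT] at hj hj'
    exact hne' (hx (hj.symm.trans hj'))
  have hunion : Finset.univ.filter (fun j => ∃ i, Y j = x i) = Finset.univ.biUnion T := by
    ext j; simp [hT]
  have key : ∀ f : EuclideanSpace ℝ (Fin d) → ℝ,
      (∑ i, (h1 (f (x i)) + h2 (-(f (Y i)))))
        = ∑ i, (h1 (f (x i)) + ((T i).card : ℝ) * h2 (-(f (x i))))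
          + ∑ j ∈ Finset.univ.filter (fun j => ¬ ∃ i, Y j = x i), h2 (-(f (Y j))) := by
    intro f
    have inner : ∀ i, (∑ j ∈ T i, h2 (-(f (Y j)))) = ((T i).card : ℝ) * h2 (-(f (x i))) := by
      intro i
      have hc : ∀ j ∈ T i, h2 (-(f (Y j))) = h2 (-(f (x i))) := by
        intro j hj
        simp [hT] at hj
        rw [hj]
      rw [Finset.sum_congr rfl hc, Finset.sum_const, nsmul_eq_mul]
    have e1 : (∑ j, h2 (-(f (Y j))))
        = ∑ i, ((T i).card : ℝ) * h2 (-(f (x i)))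
          + ∑ j ∈ Finset.univ.filter (fun j => ¬ ∃ i, Y j = x i), h2 (-(f (Y j))) := by
      rw [← Finset.sum_filter_add_sum_filter_not Finset.univ (fun j => ∃ i, Y j = x i)
        (fun j => h2 (-(f (Y j)))), hunion, Finset.sum_biUnion hdisj,
        Finset.sum_congr rfl (fun i _ => inner i)]
    have e2 : (∑ i, (h1 (f (x i)) + h2 (-(f (Y i)))))
        = (∑ i, h1 (f (x i))) + ∑ j, h2 (-(f (Y j))) := Finset.sum_add_distrib
    have e3 : (∑ i, (h1 (f (x i)) + ((T i).card : ℝ) * h2 (-(f (x i)))))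
        = (∑ i, h1 (f (x i))) + ∑ i, ((T i).card : ℝ) * h2 (-(f (x i))) :=
      Finset.sum_add_distrib
    rw [e2, e1, e3]; ring
  have hlub : IsLUB {s : ℝ |
      ∃ f : EuclideanSpace ℝ (Fin d) → ℝ, Continuous f ∧
        s = ∑ i, (h1 (f (x i)) + h2 (-(f (Y i))))}
      (∑ i, xi h1 h2 (m i)) := by
    constructor
    · rintro s ⟨f, hf, rfl⟩
      rw [key f]
      have hle1 : ∑ i, (h1 (f (x i)) + ((T i).card : ℝ) * h2 (-(f (x i))))
          ≤ ∑ i, xi h1 h2 (m i) := by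
        refine Finset.sum_le_sum fun i _ => ?_
        rw [mcard i]
        exact le_xi _ _
      have hle2 : (∑ j ∈ Finset.univ.filter (fun j => ¬ ∃ i, Y j = x i),
          h2 (-(f (Y j)))) ≤ 0 :=
        Finset.sum_nonpos fun j _ => hh2 _
      linarith
    · intro b hb
      refine le_of_forall_pos_le_add fun ε hε => ?_
      have hn0 : (0 : ℝ) < n := by exact_mod_cast hn
      set ε' : ℝ := ε / (2 * n) with hε'
      have hε'pos : 0 < ε' := by positivity
      have ht : ∀ i : Fin n, ∃ t : ℝ,
          xi h1 h2 (m i) - ε' < h1 t + (m i : ℝ) * h2 (-t) := by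
        intro i
        have hlt : xi h1 h2 (m i) - ε' < xi h1 h2 (m i) := sub_lt_self _ hε'pos
        obtain ⟨s, hs, hlt'⟩ := exists_lt_of_lt_csSup (hne (m i)) hlt
        obtain ⟨t, rfl⟩ := hs
        exact ⟨t, hlt'⟩
      choose t ht using ht
      obtain ⟨c, ⟨u, rfl⟩, hcu, hcle⟩ := A1b.exists_between (show -ε' < 0 by linarith)
      set P : Set (EuclideanSpace ℝ (Fin d)) := Set.range x ∪ Set.range Y with hP
      have hPfin : P.Finite := (Set.finite_range x).union (Set.finite_range Y)
      set v : EuclideanSpace ℝ (Fin d) → ℝ :=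
        fun p => if h : ∃ i, x i = p then t h.choose else -u with hv
      obtain ⟨f, hf, hfv⟩ := exists_cont_ext P hPfin v
      have hfx : ∀ i, f (x i) = t i := by
        intro i
        rw [hfv (x i) (Or.inl ⟨i, rfl⟩)]
        have hex : ∃ j, x j = x i := ⟨i, rfl⟩
        simp only [hv, dif_pos hex]
        congr 1
        exact hx hex.choose_spec
      have hfo : ∀ j, (¬ ∃ i, Y j = x i) → f (Y j) = -u := by
        intro j hj
        rw [hfv (Y j) (Or.inr ⟨j, rfl⟩)]
        simp only [hv]
        rw [dif_neg]
        rintro ⟨i, hi⟩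
        exact hj ⟨i, hi.symm⟩
      have hmem : (∑ i, (h1 (f (x i)) + h2 (-(f (Y i))))) ≤ b := hb ⟨f, hf, rfl⟩
      rw [key f] at hmem
      have hsum1 : ∑ i, xi h1 h2 (m i) - n * ε'
          ≤ ∑ i, (h1 (f (x i)) + ((T i).card : ℝ) * h2 (-(f (x i)))) := by
        have hle : ∀ i ∈ Finset.univ (α := Fin n),
            xi h1 h2 (m i) - ε' ≤ h1 (f (x i)) + ((T i).card : ℝ) * h2 (-(f (x i))) := by
          intro i _
          rw [hfx i, ← mcard i]
          exact (ht i).le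
        have h := Finset.sum_le_sum hle
        rw [Finset.sum_sub_distrib, Finset.sum_const, Finset.card_univ,
          Fintype.card_fin, nsmul_eq_mul] at h
        linarith
      have hsum2 : -((n : ℝ) * ε')
          ≤ (∑ j ∈ Finset.univ.filter (fun j => ¬ ∃ i, Y j = x i), h2 (-(f (Y j)))) := by
        have heach : ∀ j ∈ Finset.univ.filter (fun j : Fin n => ¬ ∃ i, Y j = x i),
            -ε' ≤ h2 (-(f (Y j))) := by
          intro j hj
          simp only [Finset.mem_filter] at hj
          rw [hfo j hj.2, neg_neg]
          exact hcu.le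
        have h := Finset.sum_le_sum heach
        rw [Finset.sum_const, nsmul_eq_mul] at h
        have hcard : ((Finset.univ.filter (fun j : Fin n => ¬ ∃ i, Y j = x i)).card : ℝ)
            ≤ n := by
          exact_mod_cast (Finset.card_filter_le _ _).trans_eq
            (Finset.card_univ.trans (Fintype.card_fin n))
        nlinarith [hε'pos.le]
      have hfin : ∑ i, xi h1 h2 (m i) ≤ b + 2 * n * ε' := by linarith
      have hee : 2 * (n : ℝ) * ε' = ε := by
        rw [hε']; field_simp
      rw [hee] at hfin
      exact hfin
  exact hlub.csSup_eq ⟨∑ i, (h1 ((fun _ => (0:ℝ)) (x i)) + h2 (-((fun _ => (0:ℝ)) (Y i)))),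
    fun _ => (0:ℝ), continuous_const, rfl⟩
end

section
/- Suppose h : ℝ → ℝ is concave with sup_{t∈ℝ} h(t) = 0 and h(0) < 0, and x_1, …, x_n ∈ ℝ^d are distinct. Then the RpGAN loss satisfies g_R(Y) ≥ h(0) for every Y ∈ (ℝ^d)^n, and equality holds if and only if there exists a permutation σ of {1,…,n} such that y_i = x_{σ(i)} for all i (i.e., the multiset {y_1,…,y_n} equals {x_1,…,x_n}). -/
open scoped BigOperators

/-- The RpGAN loss g_R(Y) = (1/n) · sup over continuous f of Σ_i h(f(x_i) − f(y_i)). -/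
noncomputable def gR {d n : ℕ} (h : ℝ → ℝ)
    (x Y : Fin n → EuclideanSpace ℝ (Fin d)) : ℝ :=
  (1 / (n : ℝ)) * sSup {s : ℝ |
    ∃ f : EuclideanSpace ℝ (Fin d) → ℝ, Continuous f ∧
      s = ∑ i, h (f (x i) - f (Y i))}

theorem stmt3 {d n : ℕ} (hd : 1 ≤ d) (hn : 1 ≤ n)
    (x : Fin n → EuclideanSpace ℝ (Fin d)) (hx : Function.Injective x)
    (h : ℝ → ℝ) (hconc : ConcaveOn ℝ Set.univ h)
    (hsup : IsLUB (Set.range h) 0) (h0 : h 0 < 0) :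
    ∀ Y : Fin n → EuclideanSpace ℝ (Fin d),
      h 0 ≤ gR h x Y ∧
      (gR h x Y = h 0 ↔ ∃ σ : Equiv.Perm (Fin n), ∀ i, Y i = x (σ i)) := by
  have hn0 : (0:ℝ) < (n:ℝ) := by exact_mod_cast hn
  have hnne : (n:ℝ) ≠ 0 := ne_of_gt hn0
  have hle0 : ∀ t, h t ≤ 0 := fun t => hsup.1 ⟨t, rfl⟩
  haveI : NeZero n := ⟨by omega⟩
  intro Y
  set S : Set ℝ := {s : ℝ |
    ∃ f : EuclideanSpace ℝ (Fin d) → ℝ, Continuous f ∧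
      s = ∑ i, h (f (x i) - f (Y i))} with hSdef
  have hmem0 : (n:ℝ) * h 0 ∈ S := by
    refine ⟨fun _ => 0, continuous_const, ?_⟩
    simp [Finset.sum_const, Finset.card_univ, nsmul_eq_mul]
  have hbdd : BddAbove S := by
    refine ⟨0, fun s hs => ?_⟩
    obtain ⟨f, hf, rfl⟩ := hs
    exact Finset.sum_nonpos fun i _ => hle0 _
  have hlow : (n:ℝ) * h 0 ≤ sSup S := le_csSup hbdd hmem0
  have hgR : gR h x Y = (1/(n:ℝ)) * sSup S := rfl
  constructor
  · rw [hgR]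
    have h1 : (1/(n:ℝ)) * (n:ℝ) = 1 := by field_simp
    nlinarith [hlow, one_div_pos.mpr hn0]
  constructor
  · -- equality → permutation
    intro heq
    by_contra hnoperm
    -- first: there exists j with Y i ≠ x j for all i
    have hj : ∃ j, ∀ i, Y i ≠ x j := by
      by_contra hc
      push_neg at hc
      choose g hg using hc
      have hginj : Function.Injective g := by
        intro a b hab
        apply hx
        rw [← hg a, ← hg b, hab]
      have hgbij : Function.Bijective g := (Finite.injective_iff_bijective).mp hginj
      refine hnoperm ⟨(Equiv.ofBijective g hgbij).symm, fun i => ?_⟩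
      have := hg ((Equiv.ofBijective g hgbij).symm i)
      rwa [show g ((Equiv.ofBijective g hgbij).symm i) = i from
        (Equiv.ofBijective g hgbij).apply_symm_apply i] at this
    obtain ⟨j, hj⟩ := hj
    -- get t0 with h 0 < h t0
    have ht0 : ∃ t0 : ℝ, h 0 < h t0 := by
      by_contra hc
      push_neg at hc
      have : (0:ℝ) ≤ h 0 := hsup.2 (fun y hy => by obtain ⟨t, rfl⟩ := hy; exact hc t)
      linarith
    obtain ⟨t0, ht0⟩ := ht0
    -- epsilon
    have hne : (Finset.univ : Finset (Fin n)).Nonempty := Finset.univ_nonempty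
    set ε : ℝ := Finset.univ.inf' hne (fun i => dist (Y i) (x j)) with hεdef
    have hε : 0 < ε := by
      rw [hεdef, Finset.lt_inf'_iff]
      intro i _
      exact dist_pos.mpr (hj i)
    have hεle : ∀ i, ε ≤ dist (Y i) (x j) :=
      fun i => Finset.inf'_le _ (Finset.mem_univ i)
    set f : EuclideanSpace ℝ (Fin d) → ℝ :=
      fun v => t0 * max 0 (1 - dist v (x j) / ε) with hfdef
    have hcont : Continuous f := by
      apply continuous_const.mul
      exact continuous_const.max
        (continuous_const.sub ((continuous_id.dist continuous_const).div_const ε))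
    have hfY : ∀ i, f (Y i) = 0 := by
      intro i
      have h1 : (1:ℝ) ≤ dist (Y i) (x j) / ε := (one_le_div hε).mpr (hεle i)
      have : max 0 (1 - dist (Y i) (x j) / ε) = 0 := max_eq_left (by linarith)
      simp [hfdef, this]
    have hfxj : f (x j) = t0 := by
      simp [hfdef]
    -- each term is ≥ h 0
    have hterm : ∀ i, h 0 ≤ h (f (x i) - f (Y i)) := by
      intro i
      rw [hfY i, sub_zero]
      set c : ℝ := max 0 (1 - dist (x i) (x j) / ε) with hcdef
      have hc0 : 0 ≤ c := le_max_left _ _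
      have hc1 : c ≤ 1 := by
        apply max_le (by norm_num)
        have : 0 ≤ dist (x i) (x j) / ε := div_nonneg dist_nonneg hε.le
        linarith
      have hjen := hconc.2 (Set.mem_univ t0) (Set.mem_univ (0:ℝ)) hc0
        (by linarith : 0 ≤ 1 - c) (by ring)
      have heqv : c • t0 + (1 - c) • (0:ℝ) = f (x i) := by
        simp [hfdef, hcdef, smul_eq_mul]; ring
      rw [heqv] at hjen
      have : h 0 ≤ c • h t0 + (1 - c) • h 0 := by
        simp only [smul_eq_mul]
        nlinarith
      linarith
    have hstrict : (n:ℝ) * h 0 < ∑ i, h (f (x i) - f (Y i)) := by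
      have := Finset.sum_lt_sum (f := fun _ : Fin n => h 0)
        (g := fun i => h (f (x i) - f (Y i)))
        (fun i _ => hterm i)
        ⟨j, Finset.mem_univ j, by show h 0 < h (f (x j) - f (Y j)); rw [hfY j, sub_zero, hfxj]; exact ht0⟩
      calc (n:ℝ) * h 0 = ∑ _i : Fin n, h 0 := by
            simp [Finset.sum_const, Finset.card_univ, nsmul_eq_mul]
        _ < _ := this
    have hmem : (∑ i, h (f (x i) - f (Y i))) ∈ S := ⟨f, hcont, rfl⟩
    have : (n:ℝ) * h 0 < sSup S := lt_of_lt_of_le hstrict (le_csSup hbdd hmem)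
    rw [hgR] at heq
    have hs : sSup S = (n:ℝ) * h 0 := by
      field_simp at heq
      linarith
    linarith
  · -- permutation → equality
    rintro ⟨σ, hσ⟩
    have hub : ∀ s ∈ S, s ≤ (n:ℝ) * h 0 := by
      rintro s ⟨f, hf, rfl⟩
      set t : Fin n → ℝ := fun i => f (x i) - f (Y i) with htdef
      have hsum0 : ∑ i, t i = 0 := by
        have : ∑ i, f (Y i) = ∑ i, f (x i) := by
          calc ∑ i, f (Y i) = ∑ i, f (x (σ i)) := by
                refine Finset.sum_congr rfl fun i _ => by rw [hσ i]
            _ = ∑ i, f (x i) := Equiv.sum_comp σ (fun i => f (x i))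
        simp [htdef, Finset.sum_sub_distrib, this]
      have hjen := hconc.le_map_sum (t := Finset.univ) (w := fun _ => (n:ℝ)⁻¹)
        (p := t) (fun i _ => by positivity)
        (by simp [Finset.sum_const, Finset.card_univ, nsmul_eq_mul])
        (fun i _ => Set.mem_univ _)
      have hL : ∑ i, (n:ℝ)⁻¹ • h (t i) = (n:ℝ)⁻¹ * ∑ i, h (t i) := by
        simp [Finset.mul_sum, smul_eq_mul]
      have hR : (∑ i, (n:ℝ)⁻¹ • t i) = 0 := by
        simp only [smul_eq_mul, ← Finset.mul_sum, hsum0, mul_zero]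
      rw [hL, hR] at hjen
      have : (n:ℝ)⁻¹ * ∑ i, h (t i) ≤ h 0 := hjen
      calc ∑ i, h (t i) = (n:ℝ) * ((n:ℝ)⁻¹ * ∑ i, h (t i)) := by
            field_simp
        _ ≤ (n:ℝ) * h 0 := by nlinarith
    have hs : sSup S = (n:ℝ) * h 0 :=
      le_antisymm (csSup_le ⟨_, hmem0⟩ hub) hlow
    rw [hgR, hs]
    field_simp
end

section
/- Suppose h : ℝ → ℝ is concave with sup_{t∈ℝ} h(t) = 0 and h(0) < 0, and x_1, …, x_n ∈ ℝ^d are distinct. Then every point Y ∈ (ℝ^d)^n is global-min-reachable for the RpGAN loss g_R: there exists a continuous path γ : [0,1] → (ℝ^d)^n with γ(0) = Y, with t ↦ g_R(γ(t)) non-increasing on [0,1], and with γ(1) a global minimizer of g_R. -/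
open scoped BigOperators

namespace Stmt4Aux

variable {d n : ℕ}

def gset (h : ℝ → ℝ) (x Y : Fin n → EuclideanSpace ℝ (Fin d)) : Set ℝ :=
  {s : ℝ | ∃ f : EuclideanSpace ℝ (Fin d) → ℝ, Continuous f ∧
      s = ∑ i, h (f (x i) - f (Y i))}

lemma gR_eq (h : ℝ → ℝ) (x Y : Fin n → EuclideanSpace ℝ (Fin d)) :
    gR h x Y = (1 / (n : ℝ)) * sSup (gset h x Y) := rfl

lemma mem_gset_const (h : ℝ → ℝ) (x Y : Fin n → EuclideanSpace ℝ (Fin d)) :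
    ((n : ℝ) * h 0) ∈ gset h x Y := by
  refine ⟨fun _ => 0, continuous_const, ?_⟩
  simp [Finset.sum_const, Finset.card_univ, nsmul_eq_mul]

lemma gset_nonpos {h : ℝ → ℝ} (hsup : IsLUB (Set.range h) 0)
    (x Y : Fin n → EuclideanSpace ℝ (Fin d)) : ∀ s ∈ gset h x Y, s ≤ 0 := by
  rintro s ⟨f, hf, rfl⟩
  exact Finset.sum_nonpos fun i _ => hsup.1 ⟨_, rfl⟩

lemma gset_bdd {h : ℝ → ℝ} (hsup : IsLUB (Set.range h) 0)
    (x Y : Fin n → EuclideanSpace ℝ (Fin d)) : BddAbove (gset h x Y) :=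
  ⟨0, fun s hs => gset_nonpos hsup x Y s hs⟩

lemma gR_ge (hn : 1 ≤ n) {h : ℝ → ℝ} (hsup : IsLUB (Set.range h) 0)
    (x Y : Fin n → EuclideanSpace ℝ (Fin d)) : h 0 ≤ gR h x Y := by
  have hnpos : (0 : ℝ) < n := by exact_mod_cast hn
  have h1 : (n : ℝ) * h 0 ≤ sSup (gset h x Y) :=
    le_csSup (gset_bdd hsup x Y) (mem_gset_const h x Y)
  have h2 : (1 / (n : ℝ)) * ((n : ℝ) * h 0) ≤ (1 / (n : ℝ)) * sSup (gset h x Y) :=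
    mul_le_mul_of_nonneg_left h1 (by positivity)
  calc h 0 = (1 / (n : ℝ)) * ((n : ℝ) * h 0) := by field_simp
    _ ≤ gR h x Y := h2

/-- Key monotonicity lemma ("Lemma B"): if nothing other than possibly `Y m` sits on `x m`,
and `Y m ≠ x m`, then moving the single coordinate `m` anywhere does not increase `gR`. -/
lemma gR_move_le (hn : 1 ≤ n) {h : ℝ → ℝ} (hsup : IsLUB (Set.range h) 0)
    {x : Fin n → EuclideanSpace ℝ (Fin d)} (hx : Function.Injective x)
    {Y Y' : Fin n → EuclideanSpace ℝ (Fin d)} (m : Fin n)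
    (hYY' : ∀ j, j ≠ m → Y' j = Y j)
    (h1 : Y m ≠ x m)
    (h2 : ∀ j, j ≠ m → Y j ≠ x m) :
    gR h x Y' ≤ gR h x Y := by
  have hsub : gset h x Y' ⊆ gset h x Y := by
    rintro s ⟨f, hf, rfl⟩
    have hne : (Finset.univ : Finset (Fin n)).Nonempty := ⟨⟨0, hn⟩, Finset.mem_univ _⟩
    set D : Fin n → ℝ := fun j =>
      if j = m then dist (Y m) (x m) else min (dist (x j) (x m)) (dist (Y j) (x m)) with hD
    set r := Finset.univ.inf' hne D with hr
    have hrpos : 0 < r := by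
      rw [hr, Finset.lt_inf'_iff]
      intro j _
      by_cases hj : j = m
      · subst hj; simp only [hD, if_pos rfl]; exact dist_pos.2 h1
      · simp only [hD, if_neg hj]
        exact lt_min (dist_pos.2 fun e => hj (hx e)) (dist_pos.2 (h2 j hj))
    have hrle : ∀ j, r ≤ D j := fun j => Finset.inf'_le D (Finset.mem_univ j)
    set χ : EuclideanSpace ℝ (Fin d) → ℝ := fun w => max 0 (1 - dist w (x m) / r) with hχ
    have hχcont : Continuous χ :=
      continuous_const.max (continuous_const.sub ((continuous_id.dist continuous_const).div_const r))
    have hχ1 : χ (x m) = 1 := by simp [hχ, dist_self]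
    have hχ0 : ∀ w, r ≤ dist w (x m) → χ w = 0 := by
      intro w hw
      have : 1 - dist w (x m) / r ≤ 0 := by
        have : (1 : ℝ) ≤ dist w (x m) / r := (one_le_div hrpos).2 hw
        linarith
      simp [hχ, max_eq_left this]
    have hχYm : χ (Y m) = 0 := by
      refine hχ0 _ ?_
      have := hrle m
      simpa [hD] using this
    have hχx : ∀ j, j ≠ m → χ (x j) = 0 := by
      intro j hj
      refine hχ0 _ ?_
      have := hrle j
      simp only [hD, if_neg hj] at this
      exact this.trans (min_le_left _ _)
    have hχY : ∀ j, j ≠ m → χ (Y j) = 0 := by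
      intro j hj
      refine hχ0 _ ?_
      have := hrle j
      simp only [hD, if_neg hj] at this
      exact this.trans (min_le_right _ _)
    refine ⟨fun w => f w + (f (Y m) - f (Y' m)) * χ w,
      hf.add (continuous_const.mul hχcont), ?_⟩
    refine Finset.sum_congr rfl fun i _ => ?_
    by_cases hi : i = m
    · subst hi
      simp only [hχ1, hχYm, mul_one, mul_zero, add_zero]
      exact congrArg h (by ring)
    · simp only [hχx i hi, hχY i hi, hYY' i hi, mul_zero, add_zero]
  have h1' : sSup (gset h x Y') ≤ sSup (gset h x Y) :=
    csSup_le_csSup (gset_bdd hsup x Y) ⟨_, mem_gset_const h x Y'⟩ hsub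
  rw [gR_eq, gR_eq]
  exact mul_le_mul_of_nonneg_left h1' (by positivity)

/-- If `Y` is a permutation-rearrangement of `x`, then `gR h x Y ≤ h 0`, i.e. `Y` is a
global minimizer (using `gR_ge`). -/
lemma gR_perm_le (hn : 1 ≤ n) {h : ℝ → ℝ} (hconc : ConcaveOn ℝ Set.univ h)
    (x Y : Fin n → EuclideanSpace ℝ (Fin d)) (σ : Equiv.Perm (Fin n))
    (hY : ∀ i, Y i = x (σ i)) : gR h x Y ≤ h 0 := by
  have hnpos : (0 : ℝ) < n := by exact_mod_cast hn
  have hbound : ∀ s ∈ gset h x Y, s ≤ (n : ℝ) * h 0 := by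
    rintro s ⟨f, hf, rfl⟩
    have hzero : ∑ i, (f (x i) - f (Y i)) = 0 := by
      simp only [hY]
      rw [Finset.sum_sub_distrib]
      rw [Equiv.sum_comp σ (fun j => f (x j))]
      ring
    have hs := hconc.le_map_sum (t := Finset.univ)
      (w := fun _ : Fin n => 1 / (n : ℝ)) (p := fun i => f (x i) - f (Y i))
      (fun _ _ => by positivity)
      (by simp [Finset.sum_const, Finset.card_univ]; field_simp)
      (fun _ _ => Set.mem_univ _)
    simp only [smul_eq_mul] at hs
    rw [← Finset.mul_sum, ← Finset.mul_sum, hzero, mul_zero] at hs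
    have hs' : (1 / (n : ℝ)) * ∑ i, h (f (x i) - f (Y i)) ≤ h 0 := hs
    calc ∑ i, h (f (x i) - f (Y i))
        = (n : ℝ) * ((1 / (n : ℝ)) * ∑ i, h (f (x i) - f (Y i))) := by field_simp
      _ ≤ (n : ℝ) * h 0 := mul_le_mul_of_nonneg_left hs' (by positivity)
  have h1 : sSup (gset h x Y) ≤ (n : ℝ) * h 0 :=
    csSup_le ⟨_, mem_gset_const h x Y⟩ hbound
  rw [gR_eq]
  calc (1 / (n : ℝ)) * sSup (gset h x Y) ≤ (1 / (n : ℝ)) * ((n : ℝ) * h 0) :=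
        mul_le_mul_of_nonneg_left h1 (by positivity)
    _ = h 0 := by field_simp

end Stmt4Aux


namespace Stmt4Comb

variable {n : ℕ} {α : Type*}

open Classical in
/-- `Fm x Y j` is the index `k` with `Y j = x k`, if it exists, else `j`. -/
noncomputable def Fm (x Y : Fin n → α) : Fin n → Fin n :=
  fun j => if hq : ∃ k, Y j = x k then hq.choose else j

/-- Indices lying on a "cycle": `Y j` is on some `x`, and `j` is `Fm`-periodic. -/
def Cset (x Y : Fin n → α) : Set (Fin n) :=
  {j | (∃ k, Y j = x k) ∧ ∃ p, 0 < p ∧ (Fm x Y)^[p] j = j}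

open Classical in
/-- The finset of indices not on a cycle. -/
noncomputable def Mset (x Y : Fin n → α) : Finset (Fin n) :=
  Finset.univ.filter (fun j => j ∉ Cset x Y)

variable {x Y : Fin n → α}

lemma mem_Mset {j : Fin n} : j ∈ Mset x Y ↔ j ∉ Cset x Y := by
  simp [Mset]

lemma Fm_spec {j : Fin n} (hq : ∃ k, Y j = x k) : Y j = x (Fm x Y j) := by
  simp only [Fm, dif_pos hq]
  exact hq.choose_spec

lemma Fm_eq (hx : Function.Injective x) {j k : Fin n} (hk : Y j = x k) : Fm x Y j = k := by
  have h1 : Y j = x (Fm x Y j) := Fm_spec ⟨k, hk⟩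
  exact hx (h1.symm.trans hk)

lemma Fm_not {j : Fin n} (hq : ¬ ∃ k, Y j = x k) : Fm x Y j = j := by
  simp only [Fm, dif_neg hq]

lemma Cset_good {j : Fin n} (hj : j ∈ Cset x Y) : Y j = x (Fm x Y j) := Fm_spec hj.1

lemma Fm_mem_Cset {j : Fin n} (hj : j ∈ Cset x Y) : Fm x Y j ∈ Cset x Y := by
  obtain ⟨hg, p, hp, hper⟩ := hj
  have hper' : (Fm x Y)^[p] (Fm x Y j) = Fm x Y j := by
    rw [← Function.iterate_succ_apply, Function.iterate_succ_apply', hper]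
  refine ⟨?_, p, hp, hper'⟩
  by_contra hng
  have hfix : Fm x Y (Fm x Y j) = Fm x Y j := Fm_not hng
  have hfix' : ∀ q, (Fm x Y)^[q] (Fm x Y j) = Fm x Y j := fun q =>
    Function.iterate_fixed hfix q
  have hjeq : j = Fm x Y j := by
    conv_lhs => rw [← hper]
    rw [show p = (p - 1) + 1 from (Nat.succ_pred_eq_of_pos hp).symm,
      Function.iterate_succ_apply, hfix' (p - 1)]
  exact hng (by rw [← hjeq]; exact hg)

lemma Cset_iter {j : Fin n} (hj : j ∈ Cset x Y) : ∀ q, (Fm x Y)^[q] j ∈ Cset x Y := by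
  intro q
  induction q with
  | zero => simpa using hj
  | succ q ih => rw [Function.iterate_succ_apply']; exact Fm_mem_Cset ih

lemma Cset_inj (hx : Function.Injective x) {j j' : Fin n}
    (hj : j ∈ Cset x Y) (hj' : j' ∈ Cset x Y) (he : Fm x Y j = Fm x Y j') : j = j' := by
  set F := Fm x Y with hF
  obtain ⟨_, p, hp, hper⟩ := hj
  obtain ⟨_, p', hp', hper'⟩ := hj'
  have hFj' : F j' = F j := he.symm
  have rep : ∀ (mm : Fin n) (pp : ℕ), 0 < pp → Function.minimalPeriod F mm ∣ pp →
      ∀ j₀ : Fin n, F^[pp] j₀ = j₀ → F j₀ = mm →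
      j₀ = F^[Function.minimalPeriod F mm - 1] mm := by
    rintro mm pp hpp ⟨u, hu⟩ j₀ hperj hFj
    set g := Function.minimalPeriod F mm with hg
    have hgpos : 0 < g := by
      rcases Nat.eq_zero_or_pos g with hg0 | hpos
      · rw [hg0] at hu; simp at hu; omega
      · exact hpos
    have hu1 : 1 ≤ u := by
      rcases Nat.eq_zero_or_pos u with rfl | hpos
      · simp at hu; omega
      · exact hpos
    have h1 : j₀ = F^[pp - 1] mm := by
      have h2 : F^[pp - 1 + 1] j₀ = F^[pp - 1] mm := by
        rw [Function.iterate_succ_apply, hFj]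
      rw [Nat.sub_add_cancel hpp] at h2
      rw [← h2, hperj]
    have hppeq : pp = g * (u - 1) + g := by
      calc pp = g * u := hu
        _ = g * ((u - 1) + 1) := by rw [Nat.sub_add_cancel hu1]
        _ = g * (u - 1) + g := by ring
    have hpp' : pp - 1 = (g - 1) + g * (u - 1) := by omega
    have hcyc : F^[g * (u - 1)] mm = mm := by
      have h2 : Function.IsPeriodicPt F (g * (u - 1)) mm :=
        (Function.isPeriodicPt_minimalPeriod F mm).mul_const (u - 1)
      exact h2
    rw [h1, hpp', Function.iterate_add_apply, hcyc]
  have hmp : Function.IsPeriodicPt F p (F j) := by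
    show F^[p] (F j) = F j
    rw [← Function.iterate_succ_apply, Function.iterate_succ_apply', hper]
  have hmp' : Function.IsPeriodicPt F p' (F j) := by
    show F^[p'] (F j) = F j
    rw [he, ← Function.iterate_succ_apply, Function.iterate_succ_apply', hper']
  have e1 := rep (F j) p hp hmp.minimalPeriod_dvd j hper rfl
  have e2 := rep (F j) p' hp' hmp'.minimalPeriod_dvd j' hper' hFj'
  rw [e1, e2]

lemma mem_Cset_of_fixed (hx : Function.Injective x) {m : Fin n} (hk : Y m = x m) :
    m ∈ Cset x Y :=
  ⟨⟨m, hk⟩, 1, one_pos, by simp [Fm_eq hx hk]⟩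

/-- If every "unassigned" index is blocked, we reach a contradiction: there is always an
unassigned index whose own target `x m` carries no other point of `Y`. -/
lemma exists_unblocked (hx : Function.Injective x) (hM : (Mset x Y).Nonempty) :
    ∃ m ∈ Mset x Y, ∀ j, j ≠ m → Y j ≠ x m := by
  by_contra hcon
  push_neg at hcon
  set F := Fm x Y with hF
  have hbl' : ∀ m : Fin n, ∃ j : Fin n,
      m ∈ Mset x Y → (j ∈ Mset x Y ∧ j ≠ m ∧ Y j = x m) := by
    intro m
    by_cases hm : m ∈ Mset x Y
    · obtain ⟨j, hj1, hj2⟩ := hcon m hm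
      refine ⟨j, fun _ => ⟨?_, hj1, hj2⟩⟩
      rw [mem_Mset]
      intro hjC
      have hFj : F j = m := Fm_eq hx hj2
      have h5 := Fm_mem_Cset hjC
      rw [← hF, hFj] at h5
      exact (mem_Mset.1 hm) h5
    · exact ⟨m, fun h => absurd h hm⟩
  choose bl hbl using hbl'
  have hinj : ∀ m₁ ∈ Mset x Y, ∀ m₂ ∈ Mset x Y, bl m₁ = bl m₂ → m₁ = m₂ := by
    intro m₁ h₁ m₂ h₂ he
    apply hx
    rw [← (hbl m₁ h₁).2.2, he, (hbl m₂ h₂).2.2]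
  have hsurj := Finset.surj_on_of_inj_on_of_card_le (s := Mset x Y) (t := Mset x Y)
    (fun m _ => bl m) (fun m hm => (hbl m hm).1) (fun a₁ a₂ ha₁ ha₂ e => hinj a₁ ha₁ a₂ ha₂ e)
    le_rfl
  have hFmem : ∀ j ∈ Mset x Y, F j ∈ Mset x Y := by
    intro j hj
    obtain ⟨m, hm, hbm⟩ := hsurj j hj
    have hYj : Y j = x m := by rw [hbm]; exact (hbl m hm).2.2
    have : F j = m := Fm_eq hx hYj
    rw [this]
    exact hm
  have hFinj : ∀ j₁ ∈ Mset x Y, ∀ j₂ ∈ Mset x Y, F j₁ = F j₂ → j₁ = j₂ := by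
    intro j₁ h₁ j₂ h₂ he
    obtain ⟨m₁, hm₁, hb₁⟩ := hsurj j₁ h₁
    obtain ⟨m₂, hm₂, hb₂⟩ := hsurj j₂ h₂
    have e₁ : F j₁ = m₁ := Fm_eq hx (by rw [hb₁]; exact (hbl m₁ hm₁).2.2)
    have e₂ : F j₂ = m₂ := Fm_eq hx (by rw [hb₂]; exact (hbl m₂ hm₂).2.2)
    have : m₁ = m₂ := by rw [← e₁, ← e₂, he]
    subst this
    rw [hb₁, hb₂]
  obtain ⟨j₀, hj₀⟩ := hM
  have hiter : ∀ q, F^[q] j₀ ∈ Mset x Y := by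
    intro q
    induction q with
    | zero => simpa using hj₀
    | succ q ih => rw [Function.iterate_succ_apply']; exact hFmem _ ih
  obtain ⟨a, ha, b, hb, hab, he⟩ := Finset.exists_ne_map_eq_of_card_lt_of_maps_to
    (s := Finset.range ((Mset x Y).card + 1)) (t := Mset x Y)
    (by simp) (fun q _ => hiter q)
  have hcancel : ∀ (q : ℕ) (j₁ j₂ : Fin n), j₁ ∈ Mset x Y → j₂ ∈ Mset x Y →
      F^[q] j₁ = F^[q] j₂ → j₁ = j₂ := by
    intro q
    induction q with
    | zero => intro j₁ j₂ _ _ he'; simpa using he'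
    | succ q ih =>
      intro j₁ j₂ h₁ h₂ he'
      rw [Function.iterate_succ_apply, Function.iterate_succ_apply] at he'
      exact hFinj _ h₁ _ h₂ (ih (F j₁) (F j₂) (hFmem _ h₁) (hFmem _ h₂) he')
  have hper : ∃ p, 0 < p ∧ F^[p] j₀ = j₀ := by
    rcases Nat.lt_or_ge a b with hlt | hge
    · refine ⟨b - a, by omega, ?_⟩
      apply hcancel a _ _ (hiter _) hj₀
      rw [← Function.iterate_add_apply, show a + (b - a) = b by omega]
      exact he.symm
    · have hlt : b < a := by omega
      refine ⟨a - b, by omega, ?_⟩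
      apply hcancel b _ _ (hiter _) hj₀
      rw [← Function.iterate_add_apply, show b + (a - b) = a by omega]
      exact he
  obtain ⟨m, hm, hbm⟩ := hsurj j₀ hj₀
  have hgood : Y j₀ = x m := by rw [hbm]; exact (hbl m hm).2.2
  exact (mem_Mset.1 hj₀) ⟨⟨m, hgood⟩, hper⟩

section Update

variable [DecidableEq (Fin n)]

lemma Fm_update_ne (hx : Function.Injective x) (m : Fin n) (j : Fin n) (hj : j ≠ m) :
    Fm x (Function.update Y m (x m)) j = Fm x Y j := by
  have hYj : Function.update Y m (x m) j = Y j := Function.update_of_ne hj _ _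
  by_cases hg : ∃ k, Y j = x k
  · obtain ⟨k, hk⟩ := hg
    rw [Fm_eq hx (show Function.update Y m (x m) j = x k by rw [hYj]; exact hk),
      Fm_eq hx hk]
  · rw [Fm_not (by rw [hYj]; exact hg), Fm_not hg]

lemma Fm_update_self (hx : Function.Injective x) (m : Fin n) :
    Fm x (Function.update Y m (x m)) m = m :=
  Fm_eq hx (by rw [Function.update_self])

lemma Cset_update (hx : Function.Injective x) {m : Fin n} (hm : m ∉ Cset x Y) :
    Cset x (Function.update Y m (x m)) = insert m (Cset x Y) := by
  apply Set.Subset.antisymm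
  · intro j hj
    by_cases hjm : j = m
    · exact hjm ▸ Set.mem_insert _ _
    refine Set.mem_insert_iff.2 (Or.inr ?_)
    obtain ⟨hg, p, hp, hper⟩ := hj
    set F1 := Fm x (Function.update Y m (x m)) with hF1
    set F := Fm x Y with hF
    have havoid : ∀ q, F1^[q] j ≠ m := by
      intro q hq
      have habs : ∀ e, F1^[q + e] j = m := by
        intro e
        induction e with
        | zero => simpa using hq
        | succ e ih =>
          rw [← Nat.add_assoc, Function.iterate_succ_apply', ih, hF1]
          exact Fm_update_self hx m
      have hper' : ∀ k, F1^[k * p] j = j := by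
        intro k
        induction k with
        | zero => simp
        | succ k ih =>
          rw [Nat.succ_mul, Function.iterate_add_apply, hper, ih]
      have hkp : q + 1 ≤ (q + 1) * p := Nat.le_mul_of_pos_right _ hp
      have : j = m := by
        rw [← hper' (q + 1), show (q + 1) * p = q + ((q + 1) * p - q) by omega, habs]
      exact hjm this
    have hiter_eq : ∀ q, F1^[q] j = F^[q] j := by
      intro q
      induction q with
      | zero => rfl
      | succ q ih =>
        rw [Function.iterate_succ_apply', Function.iterate_succ_apply', ih, hF1, hF]
        exact Fm_update_ne hx m _ (by rw [← hF, ← ih]; exact havoid q)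
    obtain ⟨k, hk⟩ := hg
    rw [Function.update_of_ne hjm] at hk
    exact ⟨⟨k, hk⟩, p, hp, by rw [← hiter_eq]; exact hper⟩
  · intro j hj
    rcases Set.mem_insert_iff.1 hj with rfl | hjC
    · exact ⟨⟨j, Function.update_self j (x j) Y⟩, 1, one_pos, by
        simp [Fm_update_self hx]⟩
    · obtain ⟨hg, p, hp, hper⟩ := hjC
      have hmem : ∀ q, (Fm x Y)^[q] j ∈ Cset x Y := Cset_iter ⟨hg, p, hp, hper⟩
      have hne : ∀ q, (Fm x Y)^[q] j ≠ m := fun q hq => hm (hq ▸ hmem q)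
      have hiter_eq : ∀ q, (Fm x (Function.update Y m (x m)))^[q] j = (Fm x Y)^[q] j := by
        intro q
        induction q with
        | zero => rfl
        | succ q ih =>
          rw [Function.iterate_succ_apply', Function.iterate_succ_apply', ih,
            Fm_update_ne hx m _ (hne q)]
      have hjm : j ≠ m := by simpa using hne 0
      obtain ⟨k, hk⟩ := hg
      exact ⟨⟨k, by rw [Function.update_of_ne hjm]; exact hk⟩, p, hp, by
        rw [hiter_eq]; exact hper⟩

lemma Mset_update (hx : Function.Injective x) {m : Fin n} (hm : m ∉ Cset x Y) :
    Mset x (Function.update Y m (x m)) = (Mset x Y).erase m := by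
  ext j
  rw [Finset.mem_erase, mem_Mset, mem_Mset, Cset_update hx hm]
  simp only [Set.mem_insert_iff]
  constructor
  · intro hj
    push_neg at hj
    exact ⟨hj.1, hj.2⟩
  · rintro ⟨h1, h2⟩ (h | h)
    · exact h1 h
    · exact h2 h

end Update

end Stmt4Comb

/-- A point `Y` is global-min-reachable for `F` if there is a continuous path starting
at `Y`, along which `F` is non-increasing, ending at a global minimizer of `F`. -/
def GlobalMinReachable {E : Type*} [TopologicalSpace E] (F : E → ℝ) (Y : E) : Prop :=
  ∃ γ : ℝ → E, ContinuousOn γ (Set.Icc 0 1) ∧ γ 0 = Y ∧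
    (∀ s ∈ Set.Icc (0 : ℝ) 1, ∀ t ∈ Set.Icc (0 : ℝ) 1, s ≤ t → F (γ t) ≤ F (γ s)) ∧
    (∀ Y', F (γ 1) ≤ F Y')

theorem stmt4 {d n : ℕ} (hd : 1 ≤ d) (hn : 1 ≤ n)
    (x : Fin n → EuclideanSpace ℝ (Fin d)) (hx : Function.Injective x)
    (h : ℝ → ℝ) (hconc : ConcaveOn ℝ Set.univ h)
    (hsup : IsLUB (Set.range h) 0) (h0 : h 0 < 0) :
    ∀ Y : Fin n → EuclideanSpace ℝ (Fin d),
      GlobalMinReachable (gR h x) Y := by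
  suffices H : ∀ (N : ℕ) (Y : Fin n → EuclideanSpace ℝ (Fin d)),
      (Stmt4Comb.Mset x Y).card ≤ N →
      ∃ γ : ℝ → (Fin n → EuclideanSpace ℝ (Fin d)), Continuous γ ∧ γ 0 = Y ∧
        (∀ s ∈ Set.Icc (0:ℝ) 1, ∀ t ∈ Set.Icc (0:ℝ) 1, s ≤ t →
          gR h x (γ t) ≤ gR h x (γ s)) ∧
        (∀ Y', gR h x (γ 1) ≤ gR h x Y') by
    intro Y
    obtain ⟨γ, hc, h0', hmono, hmin⟩ := H (Stmt4Comb.Mset x Y).card Y le_rfl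
    exact ⟨γ, hc.continuousOn, h0', hmono, hmin⟩
  intro N
  induction N with
  | zero =>
    intro Y hY
    have hall : ∀ j, j ∈ Stmt4Comb.Cset x Y := by
      intro j
      by_contra hj
      have h1 : j ∈ Stmt4Comb.Mset x Y := Stmt4Comb.mem_Mset.2 hj
      have h2 := Finset.card_pos.2 ⟨j, h1⟩
      omega
    have hinj : Function.Injective (Stmt4Comb.Fm x Y) := fun j j' e =>
      Stmt4Comb.Cset_inj hx (hall j) (hall j') e
    have hbij := Finite.injective_iff_bijective.1 hinj
    have hYx : ∀ i, Y i = x ((Equiv.ofBijective _ hbij) i) := fun i =>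
      Stmt4Comb.Cset_good (hall i)
    refine ⟨fun _ => Y, continuous_const, rfl, fun _ _ _ _ _ => le_rfl, fun Y' => ?_⟩
    calc gR h x Y ≤ h 0 := Stmt4Aux.gR_perm_le hn hconc x Y _ hYx
      _ ≤ gR h x Y' := Stmt4Aux.gR_ge hn hsup x Y'
  | succ N ih =>
    intro Y hY
    by_cases hcard : (Stmt4Comb.Mset x Y).card ≤ N
    · exact ih Y hcard
    have hMne : (Stmt4Comb.Mset x Y).Nonempty := Finset.card_pos.1 (by omega)
    obtain ⟨m, hmM, hmfree⟩ := Stmt4Comb.exists_unblocked hx hMne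
    have hmC : m ∉ Stmt4Comb.Cset x Y := Stmt4Comb.mem_Mset.1 hmM
    have hYm : Y m ≠ x m := fun e => hmC (Stmt4Comb.mem_Cset_of_fixed hx e)
    have hMY₁ : (Stmt4Comb.Mset x (Function.update Y m (x m))).card ≤ N := by
      rw [Stmt4Comb.Mset_update hx hmC, Finset.card_erase_of_mem hmM]
      omega
    obtain ⟨γ₁, hc₁, h0₁, hmono₁, hmin₁⟩ := ih (Function.update Y m (x m)) hMY₁
    set p : ℝ → EuclideanSpace ℝ (Fin d) := fun t => Y m + (2*t) • (x m - Y m) with hp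
    have hpcont : Continuous p := by
      rw [hp]
      exact continuous_const.add
        ((continuous_const.mul continuous_id).smul continuous_const)
    have hp0 : p 0 = Y m := by simp [hp]
    have hphalf : p (1/2) = x m := by
      rw [hp]
      norm_num
    have hpne : ∀ t : ℝ, t < 1/2 → p t ≠ x m := by
      intro t ht he
      have hv : Y m - x m ≠ 0 := sub_ne_zero.2 hYm
      have key : Y m + (2*t) • (x m - Y m) = x m := he
      have h1 : (2*t) • (x m - Y m) = x m - Y m := eq_sub_of_add_eq' key
      have h2 : (2*t) • (Y m - x m) = Y m - x m := by
        rw [← neg_sub (x m) (Y m), smul_neg, h1]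
      have h3 : (2*t - 1) • (Y m - x m) = 0 := by
        rw [sub_smul, one_smul, h2, sub_self]
      rcases smul_eq_zero.1 h3 with hc | hc
      · have : (2:ℝ)*t - 1 < 0 := by linarith
        rw [hc] at this
        exact absurd this (by norm_num)
      · exact hv hc
    set γseg : ℝ → (Fin n → EuclideanSpace ℝ (Fin d)) :=
      fun t => Function.update Y m (p t) with hγseg
    have hseg0 : γseg 0 = Y := by
      rw [hγseg]
      simp only [hp0]
      exact Function.update_eq_self m Y
    have hseghalf : γseg (1/2) = Function.update Y m (x m) := by
      rw [hγseg]
      simp only [hphalf]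
    have hsegcont : Continuous γseg := by
      rw [hγseg]
      apply continuous_pi
      intro j
      by_cases hj : j = m
      · subst hj
        simp only [Function.update_self]
        exact hpcont
      · simp only [Function.update_of_ne hj]
        exact continuous_const
    have hmonoseg : ∀ s t : ℝ, s ≤ t → t ≤ 1/2 →
        gR h x (γseg t) ≤ gR h x (γseg s) := by
      intro s t hst ht
      rcases lt_or_ge s (1/2 : ℝ) with hs | hs
      · refine Stmt4Aux.gR_move_le hn hsup hx m ?_ ?_ ?_
        · intro j hj
          rw [hγseg]
          simp only [Function.update_of_ne hj]
        · rw [hγseg]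
          simp only [Function.update_self]
          exact hpne s hs
        · intro j hj
          rw [hγseg]
          simp only [Function.update_of_ne hj]
          exact hmfree j hj
      · have hst' : s = t := le_antisymm hst (by linarith)
        rw [hst']
    set γ : ℝ → (Fin n → EuclideanSpace ℝ (Fin d)) :=
      fun t => if t ≤ 1/2 then γseg t else γ₁ (2*t - 1) with hγ
    have hjunc : ∀ t : ℝ, t = 1/2 → γseg t = γ₁ (2*t - 1) := by
      intro t ht
      subst ht
      rw [hseghalf, show (2*(1/2:ℝ) - 1) = 0 by norm_num, h0₁]
    have hγcont : Continuous γ := by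
      rw [hγ]
      exact Continuous.if_le hsegcont (hc₁.comp (by continuity))
        continuous_id continuous_const hjunc
    have hγeq1 : ∀ t : ℝ, t ≤ 1/2 → γ t = γseg t := by
      intro t ht
      rw [hγ]
      simp only [if_pos ht]
    have hγeq2 : ∀ t : ℝ, 1/2 ≤ t → γ t = γ₁ (2*t - 1) := by
      intro t ht
      rcases eq_or_lt_of_le ht with he | hlt
      · simp only [hγ]
        rw [if_pos he.ge]
        exact hjunc t he.symm
      · simp only [hγ]
        rw [if_neg (not_le.2 hlt)]
    refine ⟨γ, hγcont, by rw [hγeq1 0 (by norm_num), hseg0], ?_, ?_⟩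
    · intro s hs t ht hst
      rcases le_or_gt t (1/2) with ht2 | ht2
      · rw [hγeq1 t ht2, hγeq1 s (hst.trans ht2)]
        exact hmonoseg s t hst ht2
      rcases le_or_gt s (1/2) with hs2 | hs2
      · rw [hγeq1 s hs2, hγeq2 t ht2.le]
        have hb1 : (2*t - 1) ∈ Set.Icc (0:ℝ) 1 :=
          Set.mem_Icc.2 ⟨by linarith, by linarith [ht.2]⟩
        have hb0 : (0:ℝ) ∈ Set.Icc (0:ℝ) 1 := Set.mem_Icc.2 ⟨le_rfl, zero_le_one⟩
        calc gR h x (γ₁ (2*t-1)) ≤ gR h x (γ₁ 0) :=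
              hmono₁ 0 hb0 (2*t-1) hb1 (Set.mem_Icc.1 hb1).1
          _ = gR h x (Function.update Y m (x m)) := by rw [h0₁]
          _ = gR h x (γseg (1/2)) := by rw [hseghalf]
          _ ≤ gR h x (γseg s) := hmonoseg s (1/2) hs2 le_rfl
      · rw [hγeq2 t ht2.le, hγeq2 s hs2.le]
        exact hmono₁ (2*s-1) (Set.mem_Icc.2 ⟨by linarith, by linarith [hs.2]⟩)
          (2*t-1) (Set.mem_Icc.2 ⟨by linarith, by linarith [ht.2]⟩) (by linarith)
    · have hg1 : γ 1 = γ₁ 1 := by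
        rw [hγeq2 1 (by norm_num)]
        norm_num
      rw [hg1]
      exact hmin₁
end

section
/- Suppose h : ℝ → ℝ is concave with sup_{t∈ℝ} h(t) = 0 and h(0) < 0, and x_1, …, x_n ∈ ℝ^d are distinct. Let Y = (y_1, …, y_n) ∈ (ℝ^d)^n satisfy y_i ∈ {x_1, …, x_n} for every i, and let σ : {1,…,n} → {1,…,n} be the unique map with y_i = x_{σ(i)}. Then the RpGAN loss evaluates exactly to g_R(Y) = (h(0)/n) · #{i ∈ {1,…,n} : σ^k(i) = i for some integer k ≥ 1}, i.e., h(0)/n times the number of periodic points of σ. -/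
open scoped BigOperators
open Finset

section aux
variable {n : ℕ} {σ : Fin n → Fin n}

/-- Periodicity predicate. -/
def IsPer (σ : Fin n → Fin n) (i : Fin n) : Prop := ∃ k : ℕ, 1 ≤ k ∧ σ^[k] i = i

lemma isPer_apply {i : Fin n} (hi : IsPer σ i) : IsPer σ (σ i) := by
  obtain ⟨k, hk1, hk⟩ := hi
  refine ⟨k, hk1, ?_⟩
  rw [← Function.iterate_succ_apply, Function.iterate_succ_apply', hk]

lemma isPer_inj {i j : Fin n} (hi : IsPer σ i) (hj : IsPer σ j)
    (hij : σ i = σ j) : i = j := by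
  obtain ⟨k, hk1, hk⟩ := hi
  obtain ⟨l, hl1, hl⟩ := hj
  have hki : σ^[k * l] i = i := by rw [Function.iterate_mul]; exact Function.iterate_fixed hk l
  have hlj : σ^[k * l] j = j := by
    rw [mul_comm, Function.iterate_mul]; exact Function.iterate_fixed hl k
  have hpos : 1 ≤ k * l := Nat.one_le_iff_ne_zero.mpr (by positivity)
  obtain ⟨m, hm⟩ : ∃ m, k * l = m + 1 := ⟨k * l - 1, by omega⟩
  rw [hm] at hki hlj
  rw [← hki, ← hlj, Function.iterate_succ_apply, Function.iterate_succ_apply, hij]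

lemma exists_iterate_isPer (i : Fin n) : ∃ k : ℕ, IsPer σ (σ^[k] i) := by
  obtain ⟨a, b, hab, he⟩ := Finite.exists_ne_map_eq_of_infinite (fun k : ℕ => σ^[k] i)
  rcases hab.lt_or_gt with hlt | hlt
  · exact ⟨a, b - a, by omega, by
      rw [← Function.iterate_add_apply, Nat.sub_add_cancel hlt.le]; exact he.symm⟩
  · exact ⟨b, a - b, by omega, by
      rw [← Function.iterate_add_apply, Nat.sub_add_cancel hlt.le]; exact he⟩

end aux

section sums
open Classical in
noncomputable def perF {n : ℕ} (σ : Fin n → Fin n) : Finset (Fin n) :=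
  Finset.univ.filter (IsPer σ)

variable {n : ℕ} {σ : Fin n → Fin n}

lemma mem_perF {i : Fin n} : i ∈ perF σ ↔ IsPer σ i := by
  classical simp [perF]

lemma perF_image : (perF σ).image σ = perF σ := by
  classical
  apply Finset.eq_of_subset_of_card_le
  · intro j hj
    simp only [Finset.mem_image] at hj
    obtain ⟨i, hi, rfl⟩ := hj
    exact mem_perF.mpr (isPer_apply (mem_perF.mp hi))
  · rw [Finset.card_image_of_injOn]
    intro i hi j hj hij
    exact isPer_inj (mem_perF.mp hi) (mem_perF.mp hj) hij

lemma sum_perF_zero (v : Fin n → ℝ) : ∑ i ∈ perF σ, (v i - v (σ i)) = 0 := by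
  classical
  rw [Finset.sum_sub_distrib]
  have : ∑ i ∈ perF σ, v (σ i) = ∑ j ∈ (perF σ).image σ, v j := by
    rw [Finset.sum_image]
    intro i hi j hj hij
    exact isPer_inj (mem_perF.mp hi) (mem_perF.mp hj) hij
  rw [this, perF_image, sub_self]

end sums

section bounds
variable {n : ℕ} {σ : Fin n → Fin n} {h : ℝ → ℝ}

lemma sum_le_UB (hconc : ConcaveOn ℝ Set.univ h) (hub : ∀ t, h t ≤ 0)
    (v : Fin n → ℝ) :
    ∑ i, h (v i - v (σ i)) ≤ h 0 * ((perF σ).card : ℝ) := by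
  classical
  have hsplit := Finset.sum_filter_add_sum_filter_not Finset.univ (IsPer σ)
      (fun i => h (v i - v (σ i)))
  have hPf : Finset.univ.filter (IsPer σ) = perF σ := by
    ext i; simp [perF, mem_perF]
  rw [hPf] at hsplit
  rw [← hsplit]
  have h2 : ∑ i ∈ Finset.univ.filter (fun i => ¬ IsPer σ i), h (v i - v (σ i)) ≤ 0 :=
    Finset.sum_nonpos fun i _ => hub _
  have h1 : ∑ i ∈ perF σ, h (v i - v (σ i)) ≤ h 0 * ((perF σ).card : ℝ) := by
    rcases Finset.eq_empty_or_nonempty (perF σ) with he | hne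
    · simp [he]
    · set p : ℝ := ((perF σ).card : ℝ) with hp
      have hppos : 0 < p := by
        simp only [hp, Nat.cast_pos, Finset.card_pos]; exact hne
      have hJ := hconc.le_map_sum (t := perF σ) (w := fun _ => p⁻¹)
          (p := fun i => v i - v (σ i))
          (fun i _ => by positivity)
          (by rw [Finset.sum_const, nsmul_eq_mul, ← hp, mul_inv_cancel₀ hppos.ne'])
          (fun i _ => Set.mem_univ _)
      have hsum0 : ∑ i ∈ perF σ, p⁻¹ • (v i - v (σ i)) = 0 := by
        rw [← Finset.smul_sum, sum_perF_zero, smul_zero]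
      rw [hsum0] at hJ
      have : ∑ i ∈ perF σ, p⁻¹ • h (v i - v (σ i))
          = p⁻¹ * ∑ i ∈ perF σ, h (v i - v (σ i)) := by
        rw [Finset.mul_sum]; simp [smul_eq_mul]
      rw [this] at hJ
      calc ∑ i ∈ perF σ, h (v i - v (σ i))
          = p * (p⁻¹ * ∑ i ∈ perF σ, h (v i - v (σ i))) := by
            field_simp
        _ ≤ p * h 0 := by
            exact mul_le_mul_of_nonneg_left hJ hppos.le
        _ = h 0 * p := mul_comm _ _
  linarith

end bounds

section lb
variable {n : ℕ} {σ : Fin n → Fin n}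

open Classical in
lemma exists_good_v (σ : Fin n → Fin n) (t : ℝ) : ∃ v : Fin n → ℝ,
    (∀ i, IsPer σ i → v i - v (σ i) = 0) ∧ (∀ i, ¬ IsPer σ i → v i - v (σ i) = t) := by
  classical
  let m : Fin n → ℕ := fun i => Nat.find (exists_iterate_isPer (σ := σ) i)
  have hm0 : ∀ i, IsPer σ i → m i = 0 := fun i hi =>
    (Nat.find_eq_zero _).mpr (by simpa using hi)
  have hmsucc : ∀ i, ¬ IsPer σ i → m i = m (σ i) + 1 := by
    intro i hi
    have hne : m i ≠ 0 := fun h0 => hi (by simpa using (Nat.find_eq_zero _).mp h0)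
    have le1 : m i ≤ m (σ i) + 1 := Nat.find_le (by
      rw [Function.iterate_succ_apply]
      exact Nat.find_spec (exists_iterate_isPer (σ := σ) (σ i)))
    have le2 : m (σ i) ≤ m i - 1 := Nat.find_le (by
      have : σ^[m i - 1] (σ i) = σ^[m i] i := by
        conv_rhs => rw [show m i = (m i - 1) + 1 by omega]
        rw [Function.iterate_succ_apply]
      rw [this]
      exact Nat.find_spec (exists_iterate_isPer (σ := σ) i))
    omega
  refine ⟨fun i => t * (m i : ℝ), ?_, ?_⟩
  · intro i hi
    simp only
    rw [hm0 i hi, hm0 (σ i) (isPer_apply hi)]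
    ring
  · intro i hi
    simp only
    rw [hmsucc i hi]
    push_cast
    ring

end lb

section ext
variable {d n : ℕ}

lemma exists_separation (x : Fin n → EuclideanSpace ℝ (Fin d))
    (hx : Function.Injective x) :
    ∃ r > (0:ℝ), ∀ i j, i ≠ j → r ≤ dist (x i) (x j) := by
  classical
  rcases Finset.eq_empty_or_nonempty ((Finset.univ : Finset (Fin n)).offDiag) with he | hne
  · refine ⟨1, one_pos, fun i j hij => ?_⟩
    have : (i, j) ∈ (Finset.univ : Finset (Fin n)).offDiag :=
      Finset.mem_offDiag.mpr ⟨Finset.mem_univ _, Finset.mem_univ _, hij⟩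
    rw [he] at this
    exact absurd this (Finset.notMem_empty _)
  · set F := ((Finset.univ : Finset (Fin n)).offDiag).image
      (fun p => dist (x p.1) (x p.2)) with hF
    have hFne : F.Nonempty := hne.image _
    refine ⟨F.min' hFne, ?_, fun i j hij => ?_⟩
    · obtain ⟨p, hp, hpe⟩ := Finset.mem_image.mp (F.min'_mem hFne)
      rw [← hpe]
      exact dist_pos.mpr fun hcon => (Finset.mem_offDiag.mp hp).2.2 (hx hcon)
    · exact Finset.min'_le _ _ (Finset.mem_image.mpr
        ⟨(i, j), Finset.mem_offDiag.mpr ⟨Finset.mem_univ _, Finset.mem_univ _, hij⟩, rfl⟩)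

lemma exists_cont_interp (x : Fin n → EuclideanSpace ℝ (Fin d))
    (hx : Function.Injective x) (v : Fin n → ℝ) :
    ∃ f : EuclideanSpace ℝ (Fin d) → ℝ, Continuous f ∧ ∀ i, f (x i) = v i := by
  obtain ⟨r, hr0, hr⟩ := exists_separation x hx
  refine ⟨fun y => ∑ j, v j * max 0 (1 - dist y (x j) / r), ?_, ?_⟩
  · exact continuous_finset_sum _ fun j _ => (continuous_const.mul ((continuous_const.max
      (continuous_const.sub ((continuous_id.dist continuous_const).div_const r)))))
  · intro i
    simp only
    rw [Finset.sum_eq_single i]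
    · simp
    · intro j _ hji
      have h1 : (1:ℝ) ≤ dist (x i) (x j) / r :=
        (one_le_div hr0).mpr (hr _ _ fun hcon => hji hcon.symm)
      have : max 0 (1 - dist (x i) (x j) / r) = 0 := max_eq_left (by linarith)
      rw [this, mul_zero]
    · simp

end ext

theorem stmt5 {d n : ℕ} (hd : 1 ≤ d) (hn : 1 ≤ n)
    (x : Fin n → EuclideanSpace ℝ (Fin d)) (hx : Function.Injective x)
    (h : ℝ → ℝ) (hconc : ConcaveOn ℝ Set.univ h)
    (hsup : IsLUB (Set.range h) 0) (h0 : h 0 < 0)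
    (Y : Fin n → EuclideanSpace ℝ (Fin d))
    (σ : Fin n → Fin n) (hσ : ∀ i, Y i = x (σ i)) :
    gR h x Y
      = (h 0 / (n : ℝ)) *
          (Set.ncard {i : Fin n | ∃ k : ℕ, 1 ≤ k ∧ σ^[k] i = i} : ℝ) := by
  classical
  set S : Set ℝ := {s : ℝ |
    ∃ f : EuclideanSpace ℝ (Fin d) → ℝ, Continuous f ∧
      s = ∑ i, h (f (x i) - f (Y i))} with hS
  have hub : ∀ t, h t ≤ 0 := fun t => hsup.1 (Set.mem_range_self t)
  have hnpos : (0:ℝ) < (n:ℝ) := by exact_mod_cast hn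
  set p : ℝ := ((perF σ).card : ℝ) with hp
  have hncard : (Set.ncard {i : Fin n | ∃ k : ℕ, 1 ≤ k ∧ σ^[k] i = i} : ℝ) = p := by
    have hset : {i : Fin n | ∃ k : ℕ, 1 ≤ k ∧ σ^[k] i = i} = ↑(perF σ) := by
      ext i; simp [mem_perF, IsPer]
    rw [hset, Set.ncard_coe_finset]
  have hPfe : Finset.univ.filter (IsPer σ) = perF σ := by
    ext i; simp [perF, mem_perF]
  have hlub : IsLUB S (h 0 * p) := by
    constructor
    · rintro s ⟨f, hf, rfl⟩
      have heq : ∑ i, h (f (x i) - f (Y i))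
          = ∑ i, h ((fun j => f (x j)) i - (fun j => f (x j)) (σ i)) :=
        Finset.sum_congr rfl fun i _ => by rw [hσ i]
      rw [heq]
      exact sum_le_UB hconc hub _
    · intro b hb
      refine le_of_forall_pos_le_add fun ε hε => ?_
      set δ : ℝ := ε / n with hδ
      have hδpos : 0 < δ := by positivity
      have hnδ : (n:ℝ) * δ = ε := by rw [hδ]; field_simp
      obtain ⟨t, ht⟩ : ∃ t, -δ < h t := by
        by_contra hcon
        push_neg at hcon
        have hub' : (0:ℝ) ≤ -δ := hsup.2 (by rintro y ⟨u, rfl⟩; exact hcon u)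
        linarith
      obtain ⟨v, hv0, hvt⟩ := exists_good_v σ t
      obtain ⟨f, hf, hfi⟩ := exists_cont_interp x hx v
      have hmem : (∑ i, h (f (x i) - f (Y i))) ∈ S := ⟨f, hf, rfl⟩
      have hle := hb hmem
      have hsum : ∑ i, h (f (x i) - f (Y i)) = ∑ i, h (v i - v (σ i)) :=
        Finset.sum_congr rfl fun i _ => by rw [hσ i, hfi, hfi]
      have hsplit := Finset.sum_filter_add_sum_filter_not Finset.univ (IsPer σ)
          (fun i => h (v i - v (σ i)))
      rw [hPfe] at hsplit
      have h1 : ∑ i ∈ perF σ, h (v i - v (σ i)) = h 0 * p := by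
        rw [Finset.sum_congr rfl (fun i hi => by rw [hv0 i (mem_perF.mp hi)]),
          Finset.sum_const, nsmul_eq_mul, mul_comm]
      have h2 : -ε ≤ ∑ i ∈ Finset.univ.filter (fun i => ¬ IsPer σ i),
          h (v i - v (σ i)) := by
        have hconst : ∑ i ∈ Finset.univ.filter (fun i => ¬ IsPer σ i),
            h (v i - v (σ i))
            = ((Finset.univ.filter (fun i => ¬ IsPer σ i)).card : ℝ) * h t := by
          rw [Finset.sum_congr rfl
            (fun i hi => by rw [hvt i (Finset.mem_filter.mp hi).2]),
            Finset.sum_const, nsmul_eq_mul]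
        rw [hconst]
        set c : ℝ := ((Finset.univ.filter (fun i => ¬ IsPer σ i)).card : ℝ) with hc
        have hc0 : 0 ≤ c := by positivity
        have hcn : c ≤ (n:ℝ) := by
          have := Finset.card_filter_le Finset.univ (fun i => ¬ IsPer σ i)
          simp only [Finset.card_univ, Fintype.card_fin] at this
          rw [hc]
          exact_mod_cast this
        have k1 : 0 ≤ c * (h t + δ) := mul_nonneg hc0 (by linarith)
        have k2 : 0 ≤ ((n:ℝ) - c) * δ := mul_nonneg (by linarith) hδpos.le
        nlinarith
      have htotal : h 0 * p - ε ≤ ∑ i, h (v i - v (σ i)) := by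
        rw [← hsplit]; linarith
      rw [hsum] at hle
      linarith
  have hne : S.Nonempty := ⟨_, ⟨fun _ => (0:ℝ), continuous_const, rfl⟩⟩
  have hgr : gR h x Y = (1 / (n:ℝ)) * sSup S := rfl
  rw [hgr, hlub.csSup_eq hne, hncard]
  ring
end

section
/- Let x_1, …, x_n ∈ ℝ^d be distinct and define the RS-GAN loss φ_RS(Y, X) = sup over continuous f : ℝ^d → ℝ of (1/n) · Σ_{i=1}^n log(1/(1 + exp(f(y_i) − f(x_i)))). Then the global minimal value of Y ↦ φ_RS(Y, X) is −log 2, achieved if and only if there is a permutation σ of {1,…,n} with y_i = x_{σ(i)} for all i; furthermore, every Y ∈ (ℝ^d)^n is global-min-reachable for this function. -/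
open scoped BigOperators

/-- The RS-GAN loss
φ_RS(Y, X) = sup over continuous f of (1/n) · Σ_i log(1/(1 + exp(f(y_i) − f(x_i)))). -/
noncomputable def phiRS {d n : ℕ} (x Y : Fin n → EuclideanSpace ℝ (Fin d)) : ℝ :=
  sSup {s : ℝ | ∃ f : EuclideanSpace ℝ (Fin d) → ℝ, Continuous f ∧
    s = (1 / (n : ℝ)) * ∑ i, Real.log (1 / (1 + Real.exp (f (Y i) - f (x i))))}

namespace Stmt8Aux
open Classical

noncomputable def gg (t : ℝ) : ℝ := Real.log (1 / (1 + Real.exp t))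

lemma one_add_exp_pos (t : ℝ) : 0 < 1 + Real.exp t := by positivity

lemma gg_eq (t : ℝ) : gg t = -Real.log (1 + Real.exp t) := by
  rw [gg, one_div, Real.log_inv]

lemma gg_nonpos (t : ℝ) : gg t ≤ 0 := by
  rw [gg_eq, neg_nonpos]
  exact Real.log_nonneg (by nlinarith [Real.exp_pos t])

lemma gg_zero : gg 0 = -Real.log 2 := by
  rw [gg_eq, Real.exp_zero]; norm_num

lemma gg_anti {s t : ℝ} (h : s ≤ t) : gg t ≤ gg s := by
  rw [gg_eq, gg_eq, neg_le_neg_iff]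
  exact Real.log_le_log (one_add_exp_pos s) (by linarith [Real.exp_le_exp.2 h])

lemma gg_key (t : ℝ) : gg t ≤ -Real.log 2 - t / 2 := by
  have h1 : (2 : ℝ) * Real.exp (t / 2) ≤ 1 + Real.exp t := by
    nlinarith [sq_nonneg (1 - Real.exp (t / 2)), Real.exp_pos (t / 2),
      (by rw [← Real.exp_add]; norm_num : Real.exp (t/2) * Real.exp (t/2) = Real.exp t)]
  have h2 : Real.log (2 * Real.exp (t / 2)) ≤ Real.log (1 + Real.exp t) :=
    Real.log_le_log (by positivity) h1
  rw [Real.log_mul (by norm_num) (Real.exp_ne_zero _), Real.log_exp] at h2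
  rw [gg_eq]; linarith

lemma gg_gt (t : ℝ) (h : t < 0) : -Real.log 2 < gg t := by
  rw [gg_eq, neg_lt_neg_iff]
  exact Real.log_lt_log (one_add_exp_pos t) (by linarith [Real.exp_lt_one_iff.2 h])


section Comb
variable {d n : ℕ} (x Y : Fin n → EuclideanSpace ℝ (Fin d))

/-- index `i` lies on a directed cycle of the pairing graph -/
def OnCyc (i : Fin n) : Prop :=
  ∃ m : ℕ, ∃ c : ℕ → Fin n, c 0 = i ∧ c (m+1) = i ∧ ∀ l, l ≤ m → Y (c l) = x (c (l+1))

open Classical in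
noncomputable def cset : Finset (Fin n) := Finset.univ.filter (OnCyc x Y)

lemma mem_cset {i} : i ∈ cset x Y ↔ OnCyc x Y i := by
  classical simp [cset]

open Classical in
noncomputable def NX : Fin n → Fin n := fun i =>
  if h : ∃ j, Y i = x j then h.choose else i

lemma NX_spec {i} (h : ∃ j, Y i = x j) : Y i = x (NX x Y i) := by
  rw [NX, dif_pos h]; exact h.choose_spec

variable {x Y}

lemma NX_eq (hx : Function.Injective x) {i j} (h : Y i = x j) : NX x Y i = j :=
  hx ((NX_spec x Y ⟨j, h⟩).symm.trans h)

lemma oncyc_next (hx : Function.Injective x) {i j} (hi : OnCyc x Y i) (h : Y i = x j) :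
    OnCyc x Y j := by
  obtain ⟨m, c, hc0, hcm, hstep⟩ := hi
  have h1 : c 1 = j := hx (by rw [← hstep 0 (Nat.zero_le m), hc0, h])
  refine ⟨m, fun l => if l ≤ m then c (l+1) else j, by simp [h1, Nat.zero_le], by simp, ?_⟩
  intro l hl
  rcases lt_or_eq_of_le hl with hlt | heq
  · simp only [hl, if_pos, Nat.succ_le_of_lt hlt, if_pos]
    exact hstep (l+1) (Nat.succ_le_of_lt hlt)
  · subst heq
    simp only [le_refl, if_pos, hcm, if_neg (by omega : ¬ l + 1 ≤ l)]
    rw [h]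

lemma oncyc_exists_next (hx : Function.Injective x) {i} (hi : OnCyc x Y i) :
    Y i = x (NX x Y i) ∧ OnCyc x Y (NX x Y i) := by
  obtain ⟨m, c, hc0, hcm, hstep⟩ := hi
  have h : Y i = x (c 1) := by rw [← hc0]; exact hstep 0 (Nat.zero_le m)
  have := NX_eq hx h
  exact ⟨this ▸ h, this ▸ oncyc_next hx ⟨m, c, hc0, hcm, hstep⟩ h⟩

lemma oncyc_iterate (hx : Function.Injective x) {i} (hi : OnCyc x Y i) (l : ℕ) :
    OnCyc x Y ((NX x Y)^[l] i) := by
  induction l with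
  | zero => simpa using hi
  | succ l ih =>
    rw [Function.iterate_succ_apply']
    exact (oncyc_exists_next hx ih).2

lemma chain_det (hx : Function.Injective x) {i m} {c : ℕ → Fin n} (hc0 : c 0 = i)
    (hstep : ∀ l, l ≤ m → Y (c l) = x (c (l+1))) :
    ∀ l, l ≤ m + 1 → c l = (NX x Y)^[l] i := by
  intro l hl
  induction l with
  | zero => simpa using hc0
  | succ l ih =>
    have hlm : l ≤ m := by omega
    have h1 : c l = (NX x Y)^[l] i := ih (by omega)
    have h2 : NX x Y (c l) = c (l+1) := NX_eq hx (hstep l hlm)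
    rw [← h2, h1]; exact (Function.iterate_succ_apply' (NX x Y) l i).symm

lemma oncyc_period (hx : Function.Injective x) {i} (hi : OnCyc x Y i) :
    ∃ m : ℕ, (NX x Y)^[m+1] i = i := by
  obtain ⟨m, c, hc0, hcm, hstep⟩ := hi
  exact ⟨m, by rw [← chain_det hx hc0 hstep (m+1) le_rfl, hcm]⟩

lemma iterate_period {i m} (h : (NX x Y)^[m+1] i = i) (k : ℕ) :
    (NX x Y)^[k*(m+1)] i = i := by
  induction k with
  | zero => simp
  | succ k ih => rw [Nat.succ_mul, Function.iterate_add_apply, h, ih]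

lemma NX_injOn (hx : Function.Injective x) {i j} (hi : OnCyc x Y i) (hj : OnCyc x Y j)
    (hij : NX x Y i = NX x Y j) : i = j := by
  obtain ⟨m, hm⟩ := oncyc_period hx hi
  obtain ⟨p, hp⟩ := oncyc_period hx hj
  have hi' : (NX x Y)^[(p+1)*(m+1)] i = i := iterate_period hm (p+1)
  have hj' : (NX x Y)^[(m+1)*(p+1)] j = j := iterate_period hp (m+1)
  have hb : (p+1)*(m+1) = (p*m+p+m) + 1 := by ring
  have hc : (m+1)*(p+1) = (p*m+p+m) + 1 := by ring
  calc i = (NX x Y)^[(p*m+p+m)+1] i := by rw [← hb]; exact hi'.symm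
    _ = (NX x Y)^[p*m+p+m] (NX x Y i) := Function.iterate_succ_apply (NX x Y) _ i
    _ = (NX x Y)^[p*m+p+m] (NX x Y j) := by rw [hij]
    _ = (NX x Y)^[(p*m+p+m)+1] j := (Function.iterate_succ_apply (NX x Y) _ j).symm
    _ = j := by rw [← hc]; exact hj'

lemma NX_surjOn (hx : Function.Injective x) {j} (hj : OnCyc x Y j) :
    ∃ i, OnCyc x Y i ∧ NX x Y i = j := by
  obtain ⟨m, hm⟩ := oncyc_period hx hj
  exact ⟨(NX x Y)^[m] j, oncyc_iterate hx hj m, (Function.iterate_succ_apply' (NX x Y) m j).symm.trans hm⟩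

lemma telescope (hx : Function.Injective x) (F : Fin n → ℝ) :
    ∑ i ∈ cset x Y, F (NX x Y i) = ∑ i ∈ cset x Y, F i := by
  refine Finset.sum_bij (fun a _ => NX x Y a) ?_ ?_ ?_ ?_
  · intro a ha; exact (mem_cset _ _).2 (oncyc_exists_next hx ((mem_cset _ _).1 ha)).2
  · intro a ha b hb hab
    exact NX_injOn hx ((mem_cset _ _).1 ha) ((mem_cset _ _).1 hb) hab
  · intro b hb
    obtain ⟨i, hi, hij⟩ := NX_surjOn hx ((mem_cset _ _).1 hb)
    exact ⟨i, (mem_cset _ _).2 hi, hij⟩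
  · intro a _; rfl

lemma sum_t_zero (hx : Function.Injective x) (f : EuclideanSpace ℝ (Fin d) → ℝ) :
    ∑ i ∈ cset x Y, (f (Y i) - f (x i)) = 0 := by
  have h1 : ∑ i ∈ cset x Y, (f (Y i) - f (x i))
      = ∑ i ∈ cset x Y, (f (x (NX x Y i)) - f (x i)) := by
    refine Finset.sum_congr rfl fun i hi => ?_
    rw [(oncyc_exists_next hx ((mem_cset _ _).1 hi)).1]
  rw [h1, Finset.sum_sub_distrib, telescope hx (fun i => f (x i)), sub_self]

/-- chains of length `m` starting at `i` avoiding all on-cycle indices -/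
def Avoid (x Y : Fin n → EuclideanSpace ℝ (Fin d)) (i : Fin n) (m : ℕ) : Prop :=
  ∃ c : ℕ → Fin n, c 0 = i ∧ (∀ l, l < m → Y (c l) = x (c (l+1))) ∧
    ∀ l, l ≤ m → ¬ OnCyc x Y (c l)

lemma avoid_zero (x Y : Fin n → EuclideanSpace ℝ (Fin d)) {i} (hi : ¬ OnCyc x Y i) : Avoid x Y i 0 :=
  ⟨fun _ => i, rfl, fun l hl => absurd hl (by omega), fun l _ => hi⟩

lemma avoid_le (x Y : Fin n → EuclideanSpace ℝ (Fin d)) {i m} (h : Avoid x Y i m) : m ≤ n := by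
  by_contra hc
  push_neg at hc
  obtain ⟨c, hc0, hstep, hnc⟩ := h
  obtain ⟨a, b, hab, he⟩ := Fintype.exists_ne_map_eq_of_card_lt
    (fun l : Fin (n+1) => c l.val) (by simp)
  wlog hlt : (a : ℕ) < (b : ℕ) generalizing a b
  · have h' : (a : ℕ) ≠ (b : ℕ) := fun h => hab (Fin.ext h)
    exact this b a hab.symm he.symm (by omega)
  refine hnc a.val (by omega) ⟨b.val - a.val - 1, fun l => c (a.val + l), by simp, ?_, ?_⟩
  · show c (a.val + (b.val - a.val - 1 + 1)) = c a.val
    have h3 : a.val + (b.val - a.val - 1 + 1) = b.val := by omega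
    rw [h3, ← he]
  · intro l hl
    have h1 : a.val + l < m := by omega
    have h2 : a.val + (l + 1) = (a.val + l) + 1 := by omega
    show Y (c (a.val + l)) = x (c (a.val + (l+1)))
    rw [h2]
    exact hstep _ h1

open Classical in
noncomputable def rho (x Y : Fin n → EuclideanSpace ℝ (Fin d)) (i : Fin n) : ℕ := sSup {m | Avoid x Y i m}

lemma rho_avoid (x Y : Fin n → EuclideanSpace ℝ (Fin d)) {i} (hi : ¬ OnCyc x Y i) : Avoid x Y i (rho x Y i) :=
  Nat.sSup_mem ⟨0, by exact avoid_zero x Y hi⟩ ⟨n, fun _ hm => avoid_le x Y hm⟩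

lemma rho_step {x Y : Fin n → EuclideanSpace ℝ (Fin d)} {i j} (hi : ¬ OnCyc x Y i) (h : Y i = x j)
    (hj : ¬ OnCyc x Y j) : rho x Y j + 1 ≤ rho x Y i := by
  obtain ⟨c, hc0, hstep, hnc⟩ := rho_avoid x Y hj
  refine le_csSup ⟨n, fun _ hm => avoid_le x Y hm⟩ ?_
  refine ⟨fun l => if l = 0 then i else c (l-1), rfl, ?_, ?_⟩
  · intro l hl
    match l with
    | 0 => simpa [hc0] using h
    | Nat.succ k =>
      simp only [Nat.succ_ne_zero, if_neg, Nat.succ_sub_one, reduceIte]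
      exact hstep k (by omega)
  · intro l hl
    match l with
    | 0 => simpa using hi
    | Nat.succ k =>
      simp only [Nat.succ_ne_zero, if_neg, Nat.succ_sub_one, reduceIte]
      exact hnc k (by omega)

end Comb

section Analytic
variable {d n : ℕ}

noncomputable def bmp (δ : ℝ) (p z : EuclideanSpace ℝ (Fin d)) : ℝ := max 0 (1 - dist z p / δ)

lemma bmp_cont (δ : ℝ) (p : EuclideanSpace ℝ (Fin d)) : Continuous (bmp δ p) :=
  continuous_const.max
    (continuous_const.sub ((continuous_id.dist continuous_const).div_const δ))

lemma bmp_self (δ : ℝ) (p : EuclideanSpace ℝ (Fin d)) : bmp δ p p = 1 := by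
  simp [bmp]

lemma bmp_zero {δ : ℝ} {p z : EuclideanSpace ℝ (Fin d)} (hδ : 0 < δ) (h : δ ≤ dist z p) :
    bmp δ p z = 0 := by
  have h1 : (1:ℝ) ≤ dist z p / δ := (one_le_div hδ).2 h
  have h2 : 1 - dist z p / δ ≤ 0 := by linarith
  simp [bmp, h2]

variable (x Y : Fin n → EuclideanSpace ℝ (Fin d))

open Classical in
noncomputable def pts : Finset (EuclideanSpace ℝ (Fin d)) :=
  Finset.image x Finset.univ ∪ Finset.image Y Finset.univ

lemma x_mem_pts (k : Fin n) : x k ∈ pts x Y :=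
  Finset.mem_union_left _ (Finset.mem_image.2 ⟨k, Finset.mem_univ k, rfl⟩)

lemma y_mem_pts (k : Fin n) : Y k ∈ pts x Y :=
  Finset.mem_union_right _ (Finset.mem_image.2 ⟨k, Finset.mem_univ k, rfl⟩)

noncomputable def dset : Finset ℝ :=
  insert 1 ((((pts x Y) ×ˢ (pts x Y)).filter (fun pq => pq.1 ≠ pq.2)).image
      (fun pq => dist pq.1 pq.2))

noncomputable def sep : ℝ := (dset x Y).min' (Finset.insert_nonempty _ _)

lemma dset_pos : ∀ r ∈ dset x Y, 0 < r := by
  intro r hr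
  simp only [dset, Finset.mem_insert, Finset.mem_image, Finset.mem_filter] at hr
  rcases hr with rfl | ⟨pq, ⟨_, hne⟩, rfl⟩
  · norm_num
  · exact dist_pos.2 hne

lemma sep_pos : 0 < sep x Y :=
  dset_pos x Y _ (Finset.min'_mem _ _)

lemma sep_le {p q : EuclideanSpace ℝ (Fin d)} (hp : p ∈ pts x Y) (hq : q ∈ pts x Y)
    (hne : p ≠ q) : sep x Y ≤ dist p q := by
  apply Finset.min'_le
  rw [dset]
  exact Finset.mem_insert_of_mem (Finset.mem_image.2
    ⟨(p, q), Finset.mem_filter.2 ⟨Finset.mem_product.2 ⟨hp, hq⟩, hne⟩, rfl⟩)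

open Classical in
noncomputable def pot (M : ℝ) : Fin n → ℝ := fun j =>
  if OnCyc x Y j then 0 else M * (rho x Y j + 1)

noncomputable def ff (M : ℝ) : EuclideanSpace ℝ (Fin d) → ℝ :=
  fun z => ∑ j, pot x Y M j * bmp (sep x Y) (x j) z

lemma ff_cont (M : ℝ) : Continuous (ff x Y M) :=
  continuous_finset_sum _ fun j _ => continuous_const.mul (bmp_cont _ _)

lemma ff_at_x (hx : Function.Injective x) (M : ℝ) (k : Fin n) : ff x Y M (x k) = pot x Y M k := by
  rw [ff]
  rw [Finset.sum_eq_single k]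
  · rw [bmp_self, mul_one]
  · intro j _ hj
    rw [bmp_zero (sep_pos x Y)
      (sep_le x Y (x_mem_pts x Y k) (x_mem_pts x Y j) (fun he => hj (hx he.symm))), mul_zero]
  · intro h; exact absurd (Finset.mem_univ k) h

lemma ff_at_y (M : ℝ) {i : Fin n} (h : ∀ j, Y i ≠ x j) : ff x Y M (Y i) = 0 := by
  rw [ff]
  apply Finset.sum_eq_zero
  intro j _
  rw [bmp_zero (sep_pos x Y) (sep_le x Y (y_mem_pts x Y i) (x_mem_pts x Y j) (h j)), mul_zero]

variable {x Y}

lemma t_on (hx : Function.Injective x) {M : ℝ} {i} (hi : OnCyc x Y i) :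
    ff x Y M (Y i) - ff x Y M (x i) = 0 := by
  obtain ⟨h1, h2⟩ := oncyc_exists_next hx hi
  rw [h1, ff_at_x x Y hx, ff_at_x x Y hx]
  simp [pot, hi, h2]

lemma t_off (hx : Function.Injective x) {M : ℝ} (hM : 0 ≤ M) {i} (hi : ¬ OnCyc x Y i) :
    ff x Y M (Y i) - ff x Y M (x i) ≤ -M := by
  have hfx : ff x Y M (x i) = M * ((rho x Y i : ℝ) + 1) := by
    rw [ff_at_x x Y hx, pot, if_neg hi]
  have hfy : ff x Y M (Y i) ≤ M * (rho x Y i : ℝ) := by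
    by_cases h : ∃ j, Y i = x j
    · obtain ⟨j, hj⟩ := h
      rw [hj, ff_at_x x Y hx]
      by_cases hcj : OnCyc x Y j
      · rw [pot, if_pos hcj]; positivity
      · rw [pot, if_neg hcj]
        apply mul_le_mul_of_nonneg_left _ hM
        have h2 := rho_step (x := x) (Y := Y) hi hj hcj
        have h3 : ((rho x Y j : ℝ) + 1) ≤ (rho x Y i : ℝ) := by exact_mod_cast h2
        exact h3
    · push_neg at h
      rw [ff_at_y x Y M h]
      positivity
  have : M * ((rho x Y i : ℝ) + 1) = M * (rho x Y i : ℝ) + M := by ring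
  linarith

/-- the defining set of the sSup in `phiRS` -/
def vset (x Y : Fin n → EuclideanSpace ℝ (Fin d)) : Set ℝ :=
  {s : ℝ | ∃ f : EuclideanSpace ℝ (Fin d) → ℝ, Continuous f ∧
    s = (1 / (n : ℝ)) * ∑ i, Real.log (1 / (1 + Real.exp (f (Y i) - f (x i))))}

lemma val_mem (f : EuclideanSpace ℝ (Fin d) → ℝ) (hf : Continuous f) :
    (1 / (n:ℝ)) * ∑ i, gg (f (Y i) - f (x i)) ∈ vset x Y :=
  ⟨f, hf, rfl⟩

lemma vset_nonempty : (vset x Y).Nonempty := ⟨_, val_mem (fun _ => 0) continuous_const⟩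

lemma vset_bdd : BddAbove (vset x Y) := by
  refine ⟨0, fun s hs => ?_⟩
  obtain ⟨f, hf, rfl⟩ := hs
  have h1 : ∑ i, Real.log (1 / (1 + Real.exp (f (Y i) - f (x i)))) ≤ 0 :=
    Finset.sum_nonpos fun i _ => gg_nonpos _
  have h2 : (0:ℝ) ≤ 1 / (n:ℝ) := by positivity
  exact mul_nonpos_iff.2 (Or.inl ⟨h2, h1⟩)

lemma phi_le_card (hx : Function.Injective x) :
    phiRS x Y ≤ (cset x Y).card * (-Real.log 2) / n := by
  apply csSup_le vset_nonempty
  intro s hs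
  obtain ⟨f, hf, rfl⟩ := hs
  have key : ∑ i, gg (f (Y i) - f (x i)) ≤ (cset x Y).card * (-Real.log 2) := by
    rw [← Finset.sum_add_sum_compl (cset x Y) (fun i => gg (f (Y i) - f (x i)))]
    have b1 : ∑ i ∈ cset x Y, gg (f (Y i) - f (x i))
        ≤ ∑ i ∈ cset x Y, (-Real.log 2 - (f (Y i) - f (x i)) / 2) :=
      Finset.sum_le_sum fun i _ => gg_key _
    have b1' : ∑ i ∈ cset x Y, (-Real.log 2 - (f (Y i) - f (x i)) / 2)
        = (cset x Y).card * (-Real.log 2) := by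
      rw [Finset.sum_sub_distrib, Finset.sum_const, ← Finset.sum_div, sum_t_zero hx f]
      simp [mul_comm]
    have b2 : ∑ i ∈ (cset x Y)ᶜ, gg (f (Y i) - f (x i)) ≤ 0 :=
      Finset.sum_nonpos fun i _ => gg_nonpos _
    linarith
  calc (1 / (n:ℝ)) * ∑ i, Real.log (1 / (1 + Real.exp (f (Y i) - f (x i))))
      ≤ (1 / (n:ℝ)) * ((cset x Y).card * (-Real.log 2)) :=
        mul_le_mul_of_nonneg_left key (by positivity)
    _ = (cset x Y).card * (-Real.log 2) / n := by ring

lemma phi_ge_card (hn : 0 < n) (hx : Function.Injective x) :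
    (cset x Y).card * (-Real.log 2) / n ≤ phiRS x Y := by
  apply le_of_forall_pos_le_add
  intro ε hε
  set M : ℝ := max 0 (-Real.log ε) with hMdef
  have hM : 0 ≤ M := le_max_left _ _
  have hmem := val_mem (x := x) (Y := Y) (ff x Y M) (ff_cont x Y M)
  have hle := le_csSup (vset_bdd (x := x) (Y := Y)) hmem
  have hgg : -ε ≤ gg (-M) := by
    have h1 : Real.log (1 + Real.exp (-M)) ≤ Real.exp (-M) := by
      have := Real.log_le_sub_one_of_pos (one_add_exp_pos (-M))
      linarith
    have h2 : Real.exp (-M) ≤ ε := by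
      have h3 : -M ≤ Real.log ε := by
        have := le_max_right (0:ℝ) (-Real.log ε)
        linarith
      calc Real.exp (-M) ≤ Real.exp (Real.log ε) := Real.exp_le_exp.2 h3
        _ = ε := Real.exp_log hε
    rw [gg_eq]
    linarith
  have hsum : (cset x Y).card * (-Real.log 2) + (n:ℝ) * gg (-M)
      ≤ ∑ i, gg (ff x Y M (Y i) - ff x Y M (x i)) := by
    rw [← Finset.sum_add_sum_compl (cset x Y) (fun i => gg (ff x Y M (Y i) - ff x Y M (x i)))]
    have b1 : ∑ i ∈ cset x Y, gg (ff x Y M (Y i) - ff x Y M (x i))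
        = (cset x Y).card * (-Real.log 2) := by
      rw [Finset.sum_congr rfl (fun i hi => by
        rw [t_on hx ((mem_cset _ _).1 hi), gg_zero]), Finset.sum_const]
      simp [mul_comm]
    have b2 : ((cset x Y)ᶜ.card : ℝ) * gg (-M)
        ≤ ∑ i ∈ (cset x Y)ᶜ, gg (ff x Y M (Y i) - ff x Y M (x i)) := by
      have hstep : ∀ i ∈ (cset x Y)ᶜ, gg (-M) ≤ gg (ff x Y M (Y i) - ff x Y M (x i)) := by
        intro i hi
        exact gg_anti (t_off hx hM (fun hc => (Finset.mem_compl.1 hi) ((mem_cset _ _).2 hc)))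
      calc ((cset x Y)ᶜ.card : ℝ) * gg (-M) = ∑ _i ∈ (cset x Y)ᶜ, gg (-M) := by
            rw [Finset.sum_const, nsmul_eq_mul]
        _ ≤ _ := Finset.sum_le_sum hstep
    have b3 : (n:ℝ) * gg (-M) ≤ ((cset x Y)ᶜ.card : ℝ) * gg (-M) := by
      apply mul_le_mul_of_nonpos_right _ (gg_nonpos _)
      have hcard : (cset x Y)ᶜ.card ≤ n := le_trans (Finset.card_le_univ _) (by simp)
      exact_mod_cast hcard
    linarith
  have harith : (cset x Y).card * (-Real.log 2) / n + gg (-M)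
      ≤ (1 / (n:ℝ)) * ∑ i, gg (ff x Y M (Y i) - ff x Y M (x i)) := by
    have hn' : (0:ℝ) < n := by exact_mod_cast hn
    have h5 := mul_le_mul_of_nonneg_left hsum (by positivity : (0:ℝ) ≤ 1 / (n:ℝ))
    have he : (1 / (n:ℝ)) * ((cset x Y).card * (-Real.log 2) + (n:ℝ) * gg (-M))
        = (cset x Y).card * (-Real.log 2) / n + gg (-M) := by
      field_simp
    linarith [he ▸ h5]
  have hphi : phiRS x Y = sSup (vset x Y) := rfl
  rw [hphi]
  linarith

lemma phi_formula (hn : 0 < n) (hx : Function.Injective x) :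
    phiRS x Y = ((cset x Y).card : ℝ) * (-Real.log 2) / n :=
  le_antisymm (phi_le_card hx) (phi_ge_card hn hx)

lemma phi_ge (hn : 0 < n) (hx : Function.Injective x) : -Real.log 2 ≤ phiRS x Y := by
  rw [phi_formula hn hx]
  have h1 : ((cset x Y).card : ℝ) ≤ n := by
    exact_mod_cast le_trans (Finset.card_le_univ _) (le_of_eq (by simp))
  have h2 : (0:ℝ) ≤ Real.log 2 := Real.log_nonneg one_le_two
  have hn' : (0:ℝ) < n := by exact_mod_cast hn
  rw [le_div_iff₀ hn']
  nlinarith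

lemma phi_perm (hn : 0 < n) (hx : Function.Injective x) (σ : Equiv.Perm (Fin n))
    (h : ∀ i, Y i = x (σ i)) : phiRS x Y = -Real.log 2 := by
  have hn' : (0:ℝ) < n := by exact_mod_cast hn
  apply le_antisymm _ (phi_ge hn hx)
  apply csSup_le vset_nonempty
  intro s hs
  obtain ⟨f, hf, rfl⟩ := hs
  have hT : ∑ i, (f (Y i) - f (x i)) = 0 := by
    have h2 : ∑ i, f (Y i) = ∑ i, f (x (σ i)) := by
      exact Finset.sum_congr rfl fun i _ => by rw [h]
    have h3 : ∑ i, f (x (σ i)) = ∑ i, f (x i) := Equiv.sum_comp σ (fun i => f (x i))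
    rw [Finset.sum_sub_distrib, h2, h3, sub_self]
  have key : ∑ i, gg (f (Y i) - f (x i)) ≤ (n:ℝ) * (-Real.log 2) := by
    have b1 : ∑ i, gg (f (Y i) - f (x i))
        ≤ ∑ i, (-Real.log 2 - (f (Y i) - f (x i)) / 2) :=
      Finset.sum_le_sum fun i _ => gg_key _
    have b2 : ∑ i : Fin n, (-Real.log 2 - (f (Y i) - f (x i)) / 2) = (n:ℝ) * (-Real.log 2) := by
      rw [Finset.sum_sub_distrib, ← Finset.sum_div, hT, Finset.sum_const]
      simp [mul_comm]
    linarith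
  calc (1 / (n:ℝ)) * ∑ i, Real.log (1 / (1 + Real.exp (f (Y i) - f (x i))))
      ≤ (1 / (n:ℝ)) * ((n:ℝ) * (-Real.log 2)) := mul_le_mul_of_nonneg_left key (by positivity)
    _ = -Real.log 2 := by field_simp

lemma perm_of_phi (hn : 0 < n) (hx : Function.Injective x) (h : phiRS x Y = -Real.log 2) :
    ∃ σ : Equiv.Perm (Fin n), ∀ i, Y i = x (σ i) := by
  have hf := phi_formula (x := x) (Y := Y) hn hx
  have hn' : (0:ℝ) < n := by exact_mod_cast hn
  have hl2 : (0:ℝ) < Real.log 2 := Real.log_pos one_lt_two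
  have hcard : ((cset x Y).card : ℝ) = n := by
    rw [h] at hf
    have : -Real.log 2 * n = ((cset x Y).card : ℝ) * (-Real.log 2) := by
      field_simp at hf
      rw [show ((cset x Y).card : ℝ) = n by linarith]; ring
    nlinarith
  have huniv : cset x Y = Finset.univ := by
    apply Finset.eq_univ_of_card
    have : (cset x Y).card = n := by exact_mod_cast hcard
    simp [this]
  have hall : ∀ i, OnCyc x Y i := fun i => (mem_cset _ _).1 (huniv ▸ Finset.mem_univ i)
  have hN : ∀ i, Y i = x (NX x Y i) := fun i => (oncyc_exists_next hx (hall i)).1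
  have hinj : Function.Injective (NX x Y) := fun i j hij => NX_injOn hx (hall i) (hall j) hij
  exact ⟨Equiv.ofBijective _ (Finite.injective_iff_bijective.1 hinj), hN⟩

end Analytic

section Transfer
variable {d n : ℕ} {x Y Y' : Fin n → EuclideanSpace ℝ (Fin d)} {i j : Fin n}

lemma oncyc_of_agree (hagree : ∀ k, k ≠ i → Y' k = Y k) (hnoent : ∀ k, Y k ≠ x i)
    (hj : OnCyc x Y j) (hji : j ≠ i) : OnCyc x Y' j := by
  obtain ⟨m, c, hc0, hcm, hstep⟩ := hj
  have havoid : ∀ l, l ≤ m + 1 → c l ≠ i := by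
    intro l hl
    match l with
    | 0 => rw [hc0]; exact hji
    | Nat.succ k =>
      intro he
      exact hnoent (c k) (by rw [hstep k (by omega), he])
  exact ⟨m, c, hc0, hcm, fun l hl => by
    rw [hagree (c l) (havoid l (by omega))]
    exact hstep l hl⟩

lemma not_oncyc_i (hnoent : ∀ k, Y k ≠ x i) : ¬ OnCyc x Y i := by
  rintro ⟨m, c, hc0, hcm, hstep⟩
  exact hnoent (c m) (by rw [hstep m le_rfl, hcm])

lemma oncyc_pred (hj : OnCyc x Y j) : ∃ k, Y k = x j := by
  obtain ⟨m, c, hc0, hcm, hstep⟩ := hj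
  exact ⟨c m, by rw [hstep m le_rfl, hcm]⟩

lemma cset_eq_of_agree (hagree : ∀ k, k ≠ i → Y' k = Y k) (hY : ∀ k, Y k ≠ x i)
    (hY' : ∀ k, Y' k ≠ x i) : cset x Y' = cset x Y := by
  have hagree' : ∀ k, k ≠ i → Y k = Y' k := fun k hk => (hagree k hk).symm
  ext j
  rw [mem_cset, mem_cset]
  by_cases hji : j = i
  · subst hji
    constructor
    · intro hc; exact absurd hc (not_oncyc_i hY')
    · intro hc; exact absurd hc (not_oncyc_i hY)
  · exact ⟨fun hc => oncyc_of_agree hagree' hY' hc hji,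
      fun hc => oncyc_of_agree hagree hY hc hji⟩

lemma cset_update_grow (hY : ∀ k, Y k ≠ x i) :
    insert i (cset x Y) ⊆ cset x (Function.update Y i (x i)) := by
  intro j hj
  rw [Finset.mem_insert] at hj
  rw [mem_cset]
  rcases hj with rfl | hj
  · exact ⟨0, fun _ => j, rfl, rfl, fun l _ => by simp⟩
  · have hji : j ≠ i := by
      rintro rfl
      exact (not_oncyc_i hY) ((mem_cset _ _).1 hj)
    exact oncyc_of_agree (fun k hk => Function.update_of_ne hk _ _) hY
      ((mem_cset _ _).1 hj) hji

lemma exists_free (hx : Function.Injective x) (hne : cset x Y ≠ Finset.univ) :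
    ∃ i, ¬ OnCyc x Y i ∧ ∀ k, Y k ≠ x i := by
  by_contra hc
  push_neg at hc
  have htot : ∀ i, ∃ k, Y k = x i := fun i => by
    by_cases hi : OnCyc x Y i
    · exact oncyc_pred hi
    · exact hc i hi
  set prev : Fin n → Fin n := fun i => (htot i).choose with hprevdef
  have hprev : ∀ i, Y (prev i) = x i := fun i => (htot i).choose_spec
  have hpinj : Function.Injective prev := by
    intro p q hpq
    apply hx
    rw [← hprev p, ← hprev q, hpq]
  have hpsurj := Finite.injective_iff_surjective.1 hpinj
  have hYinj : Function.Injective Y := by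
    intro a b hab
    obtain ⟨ia, ha⟩ := hpsurj a
    obtain ⟨ib, hb⟩ := hpsurj b
    rw [← ha, ← hb] at hab ⊢
    rw [hprev ia, hprev ib] at hab
    rw [hx hab]
  have hNall : ∀ k, Y k = x (NX x Y k) := by
    intro k
    obtain ⟨ik, hk⟩ := hpsurj k
    exact NX_spec x Y ⟨ik, by rw [← hk, hprev ik]⟩
  have hNinj : Function.Injective (NX x Y) := by
    intro a b hab
    apply hYinj
    rw [hNall a, hNall b, hab]
  have hall : ∀ i, OnCyc x Y i := by
    intro i
    obtain ⟨a, b, hab, he⟩ := Finite.exists_ne_map_eq_of_infinite (fun l : ℕ => (NX x Y)^[l] i)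
    wlog hlt : a < b generalizing a b
    · exact this b a hab.symm he.symm (by omega)
    have hcancel : (NX x Y)^[b - a] i = i := by
      apply Function.Injective.iterate hNinj a
      rw [← Function.iterate_add_apply]
      have h4 : a + (b - a) = b := by omega
      rw [h4]
      exact he.symm
    obtain ⟨m, hm⟩ : ∃ m, b - a = m + 1 := ⟨b - a - 1, by omega⟩
    refine ⟨m, fun l => (NX x Y)^[l] i, rfl, ?_, ?_⟩
    · show (NX x Y)^[m+1] i = i
      rw [← hm]; exact hcancel
    · intro l _
      show Y ((NX x Y)^[l] i) = x ((NX x Y)^[l+1] i)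
      rw [hNall ((NX x Y)^[l] i), Function.iterate_succ_apply']
  exact hne (Finset.eq_univ_of_forall (fun i => (mem_cset _ _).2 (hall i)))

end Transfer

section Path
variable {d n : ℕ} {x : Fin n → EuclideanSpace ℝ (Fin d)}

noncomputable def leg (Y : Fin n → EuclideanSpace ℝ (Fin d)) (i : Fin n)
    (p : EuclideanSpace ℝ (Fin d)) (t : ℝ) : Fin n → EuclideanSpace ℝ (Fin d) :=
  Function.update Y i ((1 - t) • Y i + t • p)

lemma leg_cont (Y : Fin n → EuclideanSpace ℝ (Fin d)) (i : Fin n)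
    (p : EuclideanSpace ℝ (Fin d)) : Continuous (leg Y i p) := by
  apply continuous_pi
  intro k
  by_cases hk : k = i
  · subst hk
    simp only [leg, Function.update_self]
    exact ((continuous_const.sub continuous_id).smul continuous_const).add
      (continuous_id.smul continuous_const)
  · simp only [leg, Function.update_of_ne hk]
    exact continuous_const

lemma leg_zero (Y : Fin n → EuclideanSpace ℝ (Fin d)) (i : Fin n)
    (p : EuclideanSpace ℝ (Fin d)) : leg Y i p 0 = Y := by
  simp [leg]

lemma leg_one (Y : Fin n → EuclideanSpace ℝ (Fin d)) (i : Fin n)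
    (p : EuclideanSpace ℝ (Fin d)) : leg Y i p 1 = Function.update Y i p := by
  simp [leg]

lemma leg_ne {Y : Fin n → EuclideanSpace ℝ (Fin d)} {i : Fin n}
    (hY : ∀ k, Y k ≠ x i) {t : ℝ} (ht : t ≠ 1) : ∀ k, leg Y i (x i) t k ≠ x i := by
  intro k
  by_cases hk : k = i
  · subst hk
    rw [leg, Function.update_self]
    intro he
    apply hY k
    have h1 : (1 - t) • Y k = x k - t • x k := eq_sub_of_add_eq he
    have h2 : (1 - t) • (x k) = x k - t • x k := by
      rw [sub_smul, one_smul]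
    have h3 : (1 - t) • Y k = (1 - t) • (x k) := by rw [h1, h2]
    exact smul_right_injective _ (sub_ne_zero.2 (Ne.symm ht)) h3
  · rw [leg, Function.update_of_ne hk]
    exact hY k

noncomputable def clamp (t : ℝ) : ℝ := max 0 (min 1 t)

lemma clamp_mem (t : ℝ) : clamp t ∈ Set.Icc (0:ℝ) 1 :=
  ⟨le_max_left _ _, max_le (by norm_num) (min_le_left _ _)⟩

lemma clamp_eq {t : ℝ} (ht : t ∈ Set.Icc (0:ℝ) 1) : clamp t = t := by
  rw [clamp, min_eq_right ht.2, max_eq_right ht.1]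

lemma clamp_cont : Continuous clamp :=
  continuous_const.max (continuous_const.min continuous_id)

lemma reach_min (hn : 0 < n) (hx : Function.Injective x)
    {Y : Fin n → EuclideanSpace ℝ (Fin d)} (hcard : n ≤ (cset x Y).card) :
    GlobalMinReachable (phiRS x) Y := by
  have hc : ((cset x Y).card : ℝ) = n := by
    have h1 : (cset x Y).card ≤ n := le_trans (Finset.card_le_univ _) (by simp)
    have : (cset x Y).card = n := le_antisymm h1 hcard
    exact_mod_cast this
  have hn' : (0:ℝ) < n := by exact_mod_cast hn
  have hval : phiRS x Y = -Real.log 2 := by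
    rw [phi_formula hn hx, hc]
    field_simp
  refine ⟨fun _ => Y, continuousOn_const, rfl, fun s _ t _ _ => le_refl _, fun Y' => ?_⟩
  rw [hval]
  exact phi_ge hn hx

lemma reach (hn : 0 < n) (hx : Function.Injective x) :
    ∀ m (Y : Fin n → EuclideanSpace ℝ (Fin d)),
    n ≤ m + (cset x Y).card → GlobalMinReachable (phiRS x) Y := by
  intro m
  induction m with
  | zero =>
    intro Y h
    exact reach_min hn hx (by omega)
  | succ m ih =>
    intro Y h
    by_cases hcn : n ≤ (cset x Y).card
    · exact reach_min hn hx hcn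
    push_neg at hcn
    have hne : cset x Y ≠ Finset.univ := by
      intro he
      rw [he] at hcn
      simp at hcn
    obtain ⟨i, hiOn, hifree⟩ := exists_free hx hne
    set Y' := Function.update Y i (x i) with hY'def
    have hgrow : insert i (cset x Y) ⊆ cset x Y' := cset_update_grow hifree
    have hinotin : i ∉ cset x Y := fun hmem => hiOn ((mem_cset _ _).1 hmem)
    have hcard' : (cset x Y).card + 1 ≤ (cset x Y').card := by
      calc (cset x Y).card + 1 = (insert i (cset x Y)).card :=
            (Finset.card_insert_of_notMem hinotin).symm
        _ ≤ _ := Finset.card_le_card hgrow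
    obtain ⟨γ', hγ'cont, hγ'0, hγ'mono, hγ'glob⟩ := ih Y' (by omega)
    have hγ'0' : γ' 0 = Y' := hγ'0
    set γc : ℝ → (Fin n → EuclideanSpace ℝ (Fin d)) := fun s => γ' (clamp s) with hγcdef
    have hγccont : Continuous γc := hγ'cont.comp_continuous clamp_cont clamp_mem
    have hγceq : ∀ s, s ∈ Set.Icc (0:ℝ) 1 → γc s = γ' s := fun s hs =>
      congrArg γ' (clamp_eq hs)
    set γ : ℝ → (Fin n → EuclideanSpace ℝ (Fin d)) :=
      fun t => if t ≤ 1/2 then leg Y i (x i) (2*t) else γc (2*t - 1) with hγdef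
    have hLcont : Continuous (fun t : ℝ => leg Y i (x i) (2*t)) :=
      (leg_cont Y i (x i)).comp (continuous_const.mul continuous_id)
    have hRcont : Continuous (fun t : ℝ => γc (2*t - 1)) :=
      hγccont.comp ((continuous_const.mul continuous_id).sub continuous_const)
    have hγcont : Continuous γ := by
      apply Continuous.if_le hLcont hRcont continuous_id continuous_const
      intro t ht
      have ht' : t = 1/2 := ht
      subst ht'
      show leg Y i (x i) (2 * (1/2 : ℝ)) = γc (2 * (1/2 : ℝ) - 1)
      norm_num [leg_one]
      rw [hγceq 0 (by norm_num), hγ'0', hY'def]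
    -- values of phi along the path
    have hagree : ∀ (t : ℝ), ∀ k, k ≠ i → leg Y i (x i) t k = Y k :=
      fun t k hk => Function.update_of_ne hk _ _
    have hphiL : ∀ t : ℝ, t ≠ 1 → phiRS x (leg Y i (x i) t) = phiRS x Y := by
      intro t ht
      rw [phi_formula hn hx, phi_formula hn hx,
        cset_eq_of_agree (hagree t) hifree (leg_ne hifree ht)]
    have hl2 : (0:ℝ) ≤ Real.log 2 := Real.log_nonneg one_le_two
    have hn' : (0:ℝ) < n := by exact_mod_cast hn
    have hphiY' : phiRS x Y' ≤ phiRS x Y := by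
      rw [phi_formula hn hx, phi_formula hn hx]
      have hcc : ((cset x Y).card : ℝ) ≤ ((cset x Y').card : ℝ) := by
        exact_mod_cast (by omega : (cset x Y).card ≤ (cset x Y').card)
      rw [div_le_div_iff₀ hn' hn']
      nlinarith [mul_nonneg (mul_nonneg (sub_nonneg.2 hcc) hl2) hn'.le]
    -- piecewise values
    have hv1 : ∀ s : ℝ, s ≤ 1/2 → s ≠ 1/2 → phiRS x (γ s) = phiRS x Y := by
      intro s hs hs'
      rw [hγdef]
      simp only [if_pos hs]
      exact hphiL (2*s) (by intro he; apply hs'; linarith)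
    have hv2 : phiRS x (γ (1/2)) = phiRS x Y' := by
      rw [hγdef]
      simp only [if_pos (le_refl (1/2 : ℝ))]
      have h1 : 2 * (1/2 : ℝ) = 1 := by norm_num
      rw [h1, leg_one]
    have hv3 : ∀ s : ℝ, s ∈ Set.Icc (0:ℝ) 1 → ¬ (s ≤ 1/2) →
        γ s = γ' (2*s - 1) ∧ (2*s - 1) ∈ Set.Icc (0:ℝ) 1 := by
      intro s hs hs'
      push_neg at hs'
      have hmem : (2*s - 1) ∈ Set.Icc (0:ℝ) 1 := ⟨by linarith [hs'], by linarith [hs.2]⟩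
      constructor
      · rw [hγdef]
        simp only [if_neg (not_le.2 hs')]
        exact hγceq _ hmem
      · exact hmem
    have hA : ∀ s : ℝ, s ∈ Set.Icc (0:ℝ) 1 → phiRS x (γ s) ≤ phiRS x Y := by
      intro s hs
      by_cases h1 : s ≤ 1/2
      · by_cases h2 : s = 1/2
        · rw [h2, hv2]; exact hphiY'
        · rw [hv1 s h1 h2]
      · obtain ⟨he, hmem⟩ := hv3 s hs h1
        rw [he]
        calc phiRS x (γ' (2*s - 1)) ≤ phiRS x (γ' 0) :=
              hγ'mono 0 (by norm_num) _ hmem hmem.1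
          _ = phiRS x Y' := by rw [hγ'0']
          _ ≤ phiRS x Y := hphiY'
    have hB : ∀ t : ℝ, t ∈ Set.Icc (0:ℝ) 1 → (1/2 : ℝ) ≤ t → phiRS x (γ t) ≤ phiRS x Y' := by
      intro t ht h12
      by_cases h1 : t ≤ 1/2
      · have : t = 1/2 := le_antisymm h1 h12
        rw [this, hv2]
      · obtain ⟨he, hmem⟩ := hv3 t ht h1
        rw [he]
        calc phiRS x (γ' (2*t - 1)) ≤ phiRS x (γ' 0) :=
              hγ'mono 0 (by norm_num) _ hmem hmem.1
          _ = phiRS x Y' := by rw [hγ'0']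
    refine ⟨γ, hγcont.continuousOn, ?_, ?_, ?_⟩
    · rw [hγdef]
      simp only [if_pos (by norm_num : (0:ℝ) ≤ 1/2)]
      rw [mul_zero, leg_zero]
    · intro s hs t ht hst
      by_cases ht2 : t ≤ 1/2
      · have hs2 : s ≤ 1/2 := le_trans hst ht2
        by_cases hte : t = 1/2
        · subst hte
          rw [hv2]
          by_cases hse : s = 1/2
          · rw [hse, hv2]
          · rw [hv1 s hs2 hse]
            exact hphiY'
        · rw [hv1 t ht2 hte]
          by_cases hse : s = 1/2
          · exfalso
            apply hte
            have : (1/2 : ℝ) ≤ t := hse ▸ hst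
            linarith [lt_of_le_of_ne ht2 hte]
          · rw [hv1 s hs2 hse]
      · by_cases hs2 : s ≤ 1/2
        · exact le_trans (hB t ht (by linarith [not_le.1 ht2])) (by
            by_cases hse : s = 1/2
            · rw [hse, hv2]
            · rw [hv1 s hs2 hse]; exact hphiY')
        · obtain ⟨hes, hmems⟩ := hv3 s hs hs2
          obtain ⟨het, hmemt⟩ := hv3 t ht ht2
          rw [hes, het]
          exact hγ'mono _ hmems _ hmemt (by linarith)
    · intro Z
      have h1 : ¬ ((1:ℝ) ≤ 1/2) := by norm_num
      have he : γ 1 = γ' 1 := by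
        rw [hγdef]
        simp only [if_neg h1]
        have : 2 * (1:ℝ) - 1 = 1 := by norm_num
        rw [this]
        exact hγceq 1 (by norm_num)
      rw [he]
      exact hγ'glob Z

end Path
end Stmt8Aux

theorem stmt8 {d n : ℕ} (hd : 1 ≤ d) (hn : 1 ≤ n)
    (x : Fin n → EuclideanSpace ℝ (Fin d)) (hx : Function.Injective x) :
    (∀ Y : Fin n → EuclideanSpace ℝ (Fin d), -Real.log 2 ≤ phiRS x Y) ∧
    (∀ Y : Fin n → EuclideanSpace ℝ (Fin d),
      phiRS x Y = -Real.log 2 ↔ ∃ σ : Equiv.Perm (Fin n), ∀ i, Y i = x (σ i)) ∧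
    (∀ Y : Fin n → EuclideanSpace ℝ (Fin d),
      GlobalMinReachable (phiRS x) Y) := by
  have hn' : 0 < n := hn
  refine ⟨fun Y => Stmt8Aux.phi_ge hn' hx, fun Y => ?_, fun Y => ?_⟩
  · constructor
    · intro h
      exact Stmt8Aux.perm_of_phi hn' hx h
    · rintro ⟨σ, hσ⟩
      exact Stmt8Aux.phi_perm hn' hx σ hσ
  · exact Stmt8Aux.reach hn' hx n Y (by omega)
end
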